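/- arXiv:2406.09932 — 5 statements merged into one kernel-verified Lean document; each statement's English description precedes it below -/
import Mathlib

section
/- Let K be a real symmetric positive definite n×n matrix, λ > 0, y ∈ ℝⁿ, and let e : Fin m → Fin n be injective, with K_CC := K∘(e,e), K_XC := K∘(id,e), K_CX := (K_XC)ᵀ, and Q := K_XC K_CC⁻¹ K_CX. Define α := (K + λI)⁻¹ y, β := (K_CX K_XC + λ K_CC)⁻¹ K_CX y, and let δ := α − ι(β) ∈ ℝⁿ, where ι extends β by zero (placing βⱼ at index e(j)). Then δᵀ K δ ≤ 2 · tr(K − Q) · ‖y‖² / λ². -/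
open Matrix

noncomputable section

/-- The `n × m` matrix `K_XC` of kernel evaluations between all points and control points. -/
def KXC {n m : ℕ} (K : Matrix (Fin n) (Fin n) ℝ) (e : Fin m → Fin n) :
    Matrix (Fin n) (Fin m) ℝ :=
  K.submatrix id e

/-- The `m × m` control-point kernel matrix `K_CC`. -/
def KCC {n m : ℕ} (K : Matrix (Fin n) (Fin n) ℝ) (e : Fin m → Fin n) :
    Matrix (Fin m) (Fin m) ℝ :=
  K.submatrix e e

/-- The `m × n` matrix `K_CX = (K_XC)ᵀ`. -/
def KCX {n m : ℕ} (K : Matrix (Fin n) (Fin n) ℝ) (e : Fin m → Fin n) :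
    Matrix (Fin m) (Fin n) ℝ :=
  (KXC K e)ᵀ

/-- The Nyström approximation `Q = K_XC ⬝ K_CC⁻¹ ⬝ K_CX` of `K` based on control indices `e`. -/
def nystrom {n m : ℕ} (K : Matrix (Fin n) (Fin n) ℝ) (e : Fin m → Fin n) :
    Matrix (Fin n) (Fin n) ℝ :=
  KXC K e * (KCC K e)⁻¹ * KCX K e

end


lemma dot_rot {a b : ℕ} (M : Matrix (Fin a) (Fin b) ℝ) (x : Fin a → ℝ) (w : Fin b → ℝ) :
    x ⬝ᵥ (M *ᵥ w) = (Mᵀ *ᵥ x) ⬝ᵥ w := by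
  rw [dotProduct_mulVec, mulVec_transpose]

lemma dot_sub_self {a : ℕ} (u v : Fin a → ℝ) :
    (u - v) ⬝ᵥ (u - v) = u ⬝ᵥ u - 2 * (u ⬝ᵥ v) + v ⬝ᵥ v := by
  simp only [dotProduct_sub, sub_dotProduct, dotProduct_comm v u]
  ring

lemma frob_bound {a : ℕ} (S : Matrix (Fin a) (Fin a) ℝ) (v : Fin a → ℝ) :
    (S *ᵥ v) ⬝ᵥ (S *ᵥ v) ≤ (Sᵀ * S).trace * (v ⬝ᵥ v) := by
  have key : ∀ i, (S *ᵥ v) i * (S *ᵥ v) i ≤ (∑ j, S i j * S i j) * (v ⬝ᵥ v) := by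
    intro i
    have h := Finset.sum_mul_sq_le_sq_mul_sq Finset.univ (S i) v
    simpa [mulVec, dotProduct, sq, mul_self_nonneg] using h
  calc (S *ᵥ v) ⬝ᵥ (S *ᵥ v) = ∑ i, (S *ᵥ v) i * (S *ᵥ v) i := rfl
    _ ≤ ∑ i, (∑ j, S i j * S i j) * (v ⬝ᵥ v) := Finset.sum_le_sum fun i _ => key i
    _ = (∑ i, ∑ j, S i j * S i j) * (v ⬝ᵥ v) := by rw [Finset.sum_mul]
    _ = (Sᵀ * S).trace * (v ⬝ᵥ v) := by
        congr 1
        rw [Matrix.trace]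
        simp [Matrix.diag, Matrix.mul_apply, Matrix.transpose_apply]
        exact Finset.sum_comm

open scoped MatrixOrder in
lemma psd_quad_le_trace {a : ℕ} {R : Matrix (Fin a) (Fin a) ℝ} (hR : R.PosSemidef)
    (v : Fin a → ℝ) : v ⬝ᵥ (R *ᵥ v) ≤ R.trace * (v ⬝ᵥ v) := by
  set S := CFC.sqrt R with hSdef
  have hS : S * S = R := CFC.sqrt_mul_sqrt_self R hR.nonneg
  have hSt : Sᵀ = S := by
    have := (CFC.sqrt_nonneg R).posSemidef.isHermitian
    rwa [Matrix.IsHermitian, conjTranspose_eq_transpose_of_trivial] at this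
  have h1 : v ⬝ᵥ (R *ᵥ v) = (S *ᵥ v) ⬝ᵥ (S *ᵥ v) := by
    rw [← hS, ← mulVec_mulVec, dot_rot, hSt]
  have h2 := frob_bound S v
  rw [hSt, hS] at h2
  rw [h1]; exact h2

open scoped MatrixOrder in
lemma psd_sq_quad_le_trace {a : ℕ} {R : Matrix (Fin a) (Fin a) ℝ} (hR : R.PosSemidef)
    (v : Fin a → ℝ) : (R *ᵥ v) ⬝ᵥ (R *ᵥ v) ≤ R.trace * (v ⬝ᵥ (R *ᵥ v)) := by
  set S := CFC.sqrt R with hSdef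
  have hS : S * S = R := CFC.sqrt_mul_sqrt_self R hR.nonneg
  have hSt : Sᵀ = S := by
    have := (CFC.sqrt_nonneg R).posSemidef.isHermitian
    rwa [Matrix.IsHermitian, conjTranspose_eq_transpose_of_trivial] at this
  have h1 : v ⬝ᵥ (R *ᵥ v) = (S *ᵥ v) ⬝ᵥ (S *ᵥ v) := by
    rw [← hS, ← mulVec_mulVec, dot_rot, hSt]
  have h2 := frob_bound S (S *ᵥ v)
  rw [hSt, hS] at h2
  rw [h1]
  calc (R *ᵥ v) ⬝ᵥ (R *ᵥ v) = (S *ᵥ (S *ᵥ v)) ⬝ᵥ (S *ᵥ (S *ᵥ v)) := by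
        rw [mulVec_mulVec, hS]
    _ ≤ R.trace * ((S *ᵥ v) ⬝ᵥ (S *ᵥ v)) := h2

lemma psd_trace_nonneg {a : ℕ} {R : Matrix (Fin a) (Fin a) ℝ} (hR : R.PosSemidef) :
    0 ≤ R.trace := by
  rw [Matrix.trace]
  refine Finset.sum_nonneg fun i _ => ?_
  have h := hR.dotProduct_mulVec_nonneg (Pi.single i 1)
  simpa [Matrix.diag, single_dotProduct, mulVec, dotProduct_single] using h


lemma scalar_bounds (lam aa k s Y : ℝ) (hlam : 0 < lam) (hs : s = k + lam * aa)
    (hCS : s^2 ≤ aa * Y) (hk0 : 0 ≤ k) (haa0 : 0 ≤ aa) (hY0 : 0 ≤ Y) :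
    lam^2 * aa ≤ Y ∧ lam * k ≤ Y := by
  have haa : lam^2 * aa ≤ Y := by
    rcases eq_or_lt_of_le haa0 with h|h
    · rw [← h]; simpa using hY0
    · have h1 : lam^2 * aa^2 ≤ aa * Y := by nlinarith [mul_nonneg hlam.le haa0]
      have := (mul_le_mul_iff_right₀ h).mp (by nlinarith [h1] : aa * (lam^2 * aa) ≤ aa * Y)
      linarith
  refine ⟨haa, ?_⟩
  have hls : lam * s ≤ Y := by
    rcases le_or_gt s 0 with h|h
    · nlinarith
    · have h2 : (lam * s)^2 ≤ Y^2 := by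
        nlinarith [mul_le_mul_of_nonneg_left hCS (sq_nonneg lam),
          mul_le_mul_of_nonneg_right haa hY0]
      nlinarith [mul_pos hlam h, sq_nonneg (lam * s - Y)]
  nlinarith [mul_nonneg hlam.le haa0]

set_option maxHeartbeats 1600000 in
/-- (Matrix form of Theorem 4.1.) For a real symmetric positive definite
matrix `K`, `λ > 0`, data `y`, and injective control indices `e`, the difference `δ` between
the kernel ridge regression coefficients `α = (K + λI)⁻¹ y` (extended form) and the Nyström
KRR coefficients `β = (K_CX K_XC + λ K_CC)⁻¹ K_CX y` extended by zero satisfies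
`δᵀ K δ ≤ 2 · tr(K − Q) · ‖y‖² / λ²`. -/
theorem krr_nystrom_error_le_trace {n m : ℕ}
    (K : Matrix (Fin n) (Fin n) ℝ) (hK : K.PosDef)
    (lam : ℝ) (hlam : 0 < lam) (y : Fin n → ℝ)
    (e : Fin m → Fin n) (he : Function.Injective e) :
    let α := (K + lam • (1 : Matrix (Fin n) (Fin n) ℝ))⁻¹ *ᵥ y
    let β := (KCX K e * KXC K e + lam • KCC K e)⁻¹ *ᵥ (KCX K e *ᵥ y)
    let δ := α - Function.extend e β 0
    δ ⬝ᵥ (K *ᵥ δ) ≤ 2 * (K - nystrom K e).trace * (y ⬝ᵥ y) / lam ^ 2 := by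
  intro α β δ
  have hα : α = (K + lam • (1 : Matrix (Fin n) (Fin n) ℝ))⁻¹ *ᵥ y := rfl
  have hβ : β = (KCX K e * KXC K e + lam • KCC K e)⁻¹ *ᵥ (KCX K e *ᵥ y) := rfl
  have hδ : δ = α - Function.extend e β 0 := rfl
  -- the extension matrix
  set E : Matrix (Fin n) (Fin m) ℝ := Matrix.of fun i j => if e j = i then 1 else 0 with hE
  have hKsym : Kᵀ = K := by
    have := hK.isHermitian
    rwa [Matrix.IsHermitian, conjTranspose_eq_transpose_of_trivial] at this
  have hKXC : KXC K e = K * E := by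
    ext i j
    simp [KXC, Matrix.mul_apply, hE, mul_ite, Finset.sum_ite_eq]
  have hKCX : KCX K e = Eᵀ * K := by
    rw [KCX, hKXC, transpose_mul, hKsym]
  have hKCC : KCC K e = Eᵀ * K * E := by
    ext i j
    simp [KCC, Matrix.mul_apply, hE, mul_ite, ite_mul, Finset.sum_ite_eq, Finset.sum_ite_eq']
  have hExt : ∀ b : Fin m → ℝ, Function.extend e b 0 = E *ᵥ b := by
    intro b
    funext i
    by_cases h : ∃ j, e j = i
    · obtain ⟨j, rfl⟩ := h
      rw [he.extend_apply]
      simp [mulVec, dotProduct, hE, he.eq_iff, ite_mul, Finset.sum_ite_eq']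
    · rw [Function.extend_apply' _ _ _ h]
      simp only [mulVec, dotProduct, hE, Pi.zero_apply, Matrix.of_apply]
      symm
      refine Finset.sum_eq_zero fun j _ => ?_
      have : ¬ (e j = i) := fun hc => h ⟨j, hc⟩
      simp [this]
  -- A = K + lam I
  set A : Matrix (Fin n) (Fin n) ℝ := K + lam • (1 : Matrix (Fin n) (Fin n) ℝ) with hAdef
  have hApd : A.PosDef := by
    refine hK.add_posSemidef ?_
    rw [Matrix.smul_one_eq_diagonal]
    exact Matrix.posSemidef_diagonal_iff.mpr fun i => hlam.le
  have hαy : A *ᵥ α = y := by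
    rw [hα, mulVec_mulVec, Matrix.mul_nonsing_inv _ ((Matrix.isUnit_iff_isUnit_det _).mp hApd.isUnit), one_mulVec]
  have hy : K *ᵥ α + lam • α = y := by
    rw [← hαy, hAdef, add_mulVec, smul_mulVec, one_mulVec]
  -- G = K_CC as E^T K E
  set G : Matrix (Fin m) (Fin m) ℝ := Eᵀ * K * E with hGdef
  have hGt : Gᵀ = G := by
    rw [hGdef]
    simp [transpose_mul, hKsym, Matrix.mul_assoc]
  have hEvec : ∀ (x : Fin m → ℝ) (j : Fin m), (E *ᵥ x) (e j) = x j := by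
    intro x j
    simp [mulVec, dotProduct, hE, he.eq_iff, ite_mul, Finset.sum_ite_eq']
  have hEinj : ∀ x : Fin m → ℝ, x ≠ 0 → E *ᵥ x ≠ 0 := by
    intro x hx hc
    apply hx
    funext j
    have := congrFun hc (e j)
    rwa [hEvec x j, Pi.zero_apply] at this
  have hGquad : ∀ x : Fin m → ℝ, x ⬝ᵥ (G *ᵥ x) = (E *ᵥ x) ⬝ᵥ (K *ᵥ (E *ᵥ x)) := by
    intro x
    rw [hGdef, ← mulVec_mulVec, ← mulVec_mulVec, dot_rot, transpose_transpose]
  have hGpd : G.PosDef := by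
    refine Matrix.PosDef.of_dotProduct_mulVec_pos ?_ ?_
    · rw [Matrix.IsHermitian, conjTranspose_eq_transpose_of_trivial, hGt]
    · intro x hx
      rw [star_trivial, hGquad x]
      have h2 := hK.dotProduct_mulVec_pos (hEinj x hx)
      rwa [star_trivial] at h2
  have hGdet : IsUnit G.det := (Matrix.isUnit_iff_isUnit_det _).mp hGpd.isUnit
  have hGGinv : G * G⁻¹ = 1 := Matrix.mul_nonsing_inv _ hGdet
  have hGinvG : G⁻¹ * G = 1 := Matrix.nonsing_inv_mul _ hGdet
  have hGinvt : (G⁻¹)ᵀ = G⁻¹ := by rw [Matrix.transpose_nonsing_inv, hGt]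
  -- B matrix
  set B : Matrix (Fin m) (Fin m) ℝ := Eᵀ * K * (K * E) + lam • G with hBdef
  have hBpd : B.PosDef := by
    refine Matrix.PosDef.posSemidef_add ?_ ?_
    · have h1 : Eᵀ * K * (K * E) = (K * E)ᵀ * (K * E) := by
        rw [transpose_mul, hKsym, Matrix.mul_assoc]
      rw [h1]
      have := Matrix.posSemidef_conjTranspose_mul_self (K * E)
      rwa [conjTranspose_eq_transpose_of_trivial] at this
    · refine Matrix.PosDef.of_dotProduct_mulVec_pos ?_ ?_
      · rw [Matrix.IsHermitian, conjTranspose_eq_transpose_of_trivial, transpose_smul, hGt]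
      · intro x hx
        rw [star_trivial, smul_mulVec, dotProduct_smul, smul_eq_mul]
        exact mul_pos hlam (by have := hGpd.dotProduct_mulVec_pos hx; rwa [star_trivial] at this)
  have hβy : B *ᵥ β = (Eᵀ * K) *ᵥ y := by
    rw [hβ, hKCX, hKXC, hKCC, ← hBdef, mulVec_mulVec, mulVec_mulVec,
      ← Matrix.mul_assoc, Matrix.mul_nonsing_inv _ ((Matrix.isUnit_iff_isUnit_det _).mp hBpd.isUnit),
      Matrix.one_mul]
  -- Q and R
  set Q : Matrix (Fin n) (Fin n) ℝ := K * E * G⁻¹ * (Eᵀ * K) with hQdef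
  have hQnys : nystrom K e = Q := by
    rw [nystrom, hKXC, hKCX, hKCC]
  set R : Matrix (Fin n) (Fin n) ℝ := K - Q with hRdef
  have hQt : Qᵀ = Q := by
    rw [hQdef]
    simp only [transpose_mul, hGinvt, transpose_transpose, hKsym]
    rw [Matrix.mul_assoc, Matrix.mul_assoc, Matrix.mul_assoc]
  have hRt : Rᵀ = R := by rw [hRdef, transpose_sub, hKsym, hQt]
  have hEtQ : Eᵀ * Q = Eᵀ * K := by
    calc Eᵀ * Q = (Eᵀ * K * E) * G⁻¹ * (Eᵀ * K) := by
          rw [hQdef]; simp only [Matrix.mul_assoc]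
      _ = Eᵀ * K := by rw [← hGdef, hGGinv, Matrix.one_mul]
  have hEtR : Eᵀ * R = 0 := by
    rw [hRdef, Matrix.mul_sub, hEtQ, sub_self]
  -- symmetry helper
  have hsym : ∀ u w : Fin n → ℝ, (K *ᵥ u) ⬝ᵥ w = u ⬝ᵥ (K *ᵥ w) := by
    intro u w
    rw [dot_rot, hKsym]
  have hdotself : ∀ {a : ℕ} (u : Fin a → ℝ), (0:ℝ) ≤ u ⬝ᵥ u := by
    intro a u
    exact Finset.sum_nonneg fun i _ => mul_self_nonneg _
  -- quadratic expansion of the objective around α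
  have keyA : ∀ d : Fin n → ℝ,
      (y - K *ᵥ (α + d)) ⬝ᵥ (y - K *ᵥ (α + d)) + lam * ((α + d) ⬝ᵥ (K *ᵥ (α + d)))
      = ((y - K *ᵥ α) ⬝ᵥ (y - K *ᵥ α) + lam * (α ⬝ᵥ (K *ᵥ α)))
        + ((K *ᵥ d) ⬝ᵥ (K *ᵥ d) + lam * (d ⬝ᵥ (K *ᵥ d))) := by
    intro d
    have hyα : y - K *ᵥ α = lam • α := by rw [← hy]; abel
    have e1 : y - K *ᵥ (α + d) = lam • α - K *ᵥ d := by rw [mulVec_add, ← hyα]; abel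
    rw [e1, hyα, dot_sub_self, mulVec_add]
    simp only [dotProduct_add, add_dotProduct, dotProduct_smul, smul_dotProduct, smul_eq_mul]
    have hq : d ⬝ᵥ (K *ᵥ α) = α ⬝ᵥ (K *ᵥ d) := by rw [← hsym d α, dotProduct_comm]
    linear_combination lam * hq
  -- the projection coefficients u
  set u : Fin m → ℝ := G⁻¹ *ᵥ ((Eᵀ * K) *ᵥ α) with hu
  have hQv : ∀ v : Fin n → ℝ, K *ᵥ (E *ᵥ (G⁻¹ *ᵥ ((Eᵀ * K) *ᵥ v))) = Q *ᵥ v := by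
    intro v
    rw [mulVec_mulVec, mulVec_mulVec, mulVec_mulVec]
  have hERzero : ∀ v : Fin n → ℝ, Eᵀ *ᵥ (R *ᵥ v) = 0 := by
    intro v
    rw [mulVec_mulVec, hEtR, zero_mulVec]
  have hEdot : ∀ (c : Fin m → ℝ) (x : Fin n → ℝ), (E *ᵥ c) ⬝ᵥ x = c ⬝ᵥ (Eᵀ *ᵥ x) := by
    intro c x
    rw [dot_rot Eᵀ c x, transpose_transpose]
  -- optimality equation for β in scalar form
  have hopt : ∀ dd : Fin m → ℝ,
      (E *ᵥ dd) ⬝ᵥ (K *ᵥ (K *ᵥ (E *ᵥ β))) + lam * ((E *ᵥ dd) ⬝ᵥ (K *ᵥ (E *ᵥ β)))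
        = (E *ᵥ dd) ⬝ᵥ (K *ᵥ y) := by
    intro dd
    have h := congrArg (fun x => dd ⬝ᵥ x) hβy
    simp only [hBdef, hGdef, add_mulVec, smul_mulVec, dotProduct_add, dotProduct_smul,
      smul_eq_mul, ← mulVec_mulVec, ← hEdot] at h
    exact h
  -- R is positive semidefinite
  have hRquad : ∀ v : Fin n → ℝ, 0 ≤ v ⬝ᵥ (R *ᵥ v) := by
    intro v
    set Z : Fin n → ℝ := E *ᵥ (G⁻¹ *ᵥ ((Eᵀ * K) *ᵥ v)) with hZ
    have hKZ : K *ᵥ Z = Q *ᵥ v := hQv v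
    have t1 : v ⬝ᵥ (Q *ᵥ v) = Z ⬝ᵥ (K *ᵥ v) := by
      rw [← hKZ, ← hsym Z v, dotProduct_comm]
    have t0 : Eᵀ *ᵥ (Q *ᵥ v) = Eᵀ *ᵥ (K *ᵥ v) := by
      rw [mulVec_mulVec, mulVec_mulVec, hEtQ]
    have t2 : Z ⬝ᵥ (K *ᵥ Z) = Z ⬝ᵥ (K *ᵥ v) := by
      rw [hKZ, hZ, hEdot, hEdot, t0]
    have expand : (v - Z) ⬝ᵥ (K *ᵥ (v - Z)) = v ⬝ᵥ (R *ᵥ v) := by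
      rw [mulVec_sub]
      simp only [dotProduct_sub, sub_dotProduct]
      rw [hRdef, sub_mulVec, dotProduct_sub]
      have t3 : v ⬝ᵥ (K *ᵥ Z) = Z ⬝ᵥ (K *ᵥ v) := by rw [← hsym v Z, dotProduct_comm]
      rw [t3, t2, t1]
      ring
    rw [← expand]
    have h := hK.posSemidef.dotProduct_mulVec_nonneg (v - Z)
    rwa [star_trivial] at h
  have hRpsd : R.PosSemidef := by
    refine Matrix.PosSemidef.of_dotProduct_mulVec_nonneg ?_ ?_
    · rw [Matrix.IsHermitian, conjTranspose_eq_transpose_of_trivial, hRt]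
    · intro v
      rw [star_trivial]
      exact hRquad v
  -- Q is positive semidefinite
  have hQpsd : Q.PosSemidef := by
    have h := (hGpd.inv.posSemidef).mul_mul_conjTranspose_same (K * E)
    rwa [conjTranspose_eq_transpose_of_trivial, transpose_mul, hKsym] at h
  -- optimality of β against the candidate u
  have keyB :
      (y - K *ᵥ (E *ᵥ β)) ⬝ᵥ (y - K *ᵥ (E *ᵥ β)) + lam * ((E *ᵥ β) ⬝ᵥ (K *ᵥ (E *ᵥ β)))
      ≤ (y - K *ᵥ (E *ᵥ u)) ⬝ᵥ (y - K *ᵥ (E *ᵥ u)) + lam * ((E *ᵥ u) ⬝ᵥ (K *ᵥ (E *ᵥ u))) := by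
    have hopt' := hopt (u - β)
    have h0 : β + (u - β) = u := by abel
    have hEu : E *ᵥ u = E *ᵥ β + E *ᵥ (u - β) := by rw [← mulVec_add, h0]
    set z := E *ᵥ β with hzdef
    set w := E *ᵥ (u - β) with hwdef
    have e1 : y - K *ᵥ (z + w) = (y - K *ᵥ z) - K *ᵥ w := by rw [mulVec_add]; abel
    have hq1 : z ⬝ᵥ (K *ᵥ w) = w ⬝ᵥ (K *ᵥ z) := by rw [← hsym z w, dotProduct_comm]
    have hq2 : (y - K *ᵥ z) ⬝ᵥ (K *ᵥ w) = w ⬝ᵥ (K *ᵥ y) - w ⬝ᵥ (K *ᵥ (K *ᵥ z)) := by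
      rw [sub_dotProduct]
      have a1 : y ⬝ᵥ (K *ᵥ w) = w ⬝ᵥ (K *ᵥ y) := by rw [← hsym y w, dotProduct_comm]
      have a2 : (K *ᵥ z) ⬝ᵥ (K *ᵥ w) = w ⬝ᵥ (K *ᵥ (K *ᵥ z)) := by
        rw [← hsym w (K *ᵥ z), dotProduct_comm]
      rw [a1, a2]
    have hEq : (y - K *ᵥ (z + w)) ⬝ᵥ (y - K *ᵥ (z + w)) + lam * ((z + w) ⬝ᵥ (K *ᵥ (z + w)))
        = ((y - K *ᵥ z) ⬝ᵥ (y - K *ᵥ z) + lam * (z ⬝ᵥ (K *ᵥ z)))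
          + ((K *ᵥ w) ⬝ᵥ (K *ᵥ w) + lam * (w ⬝ᵥ (K *ᵥ w))) := by
      rw [e1, dot_sub_self]
      simp only [mulVec_add, dotProduct_add, add_dotProduct]
      linear_combination (-2:ℝ) * hq2 + lam * hq1 + 2 * hopt'
    have h1 : (0:ℝ) ≤ (K *ᵥ w) ⬝ᵥ (K *ᵥ w) := hdotself _
    have h2 : (0:ℝ) ≤ w ⬝ᵥ (K *ᵥ w) := by
      have := hK.posSemidef.dotProduct_mulVec_nonneg w
      rwa [star_trivial] at this
    rw [hEu, hEq]
    nlinarith [mul_nonneg hlam.le h2]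
  -- instantiate the expansion at E β and E u
  have hnd : E *ᵥ β - α = -δ := by rw [hδ, hExt β]; abel
  have hA1 := keyA (E *ᵥ β - α)
  rw [show α + (E *ᵥ β - α) = E *ᵥ β by abel] at hA1
  have hA2 := keyA (E *ᵥ u - α)
  rw [show α + (E *ᵥ u - α) = E *ᵥ u by abel] at hA2
  have hKEu : K *ᵥ (E *ᵥ u) = Q *ᵥ α := by rw [hu]; exact hQv α
  have hKdu : K *ᵥ (E *ᵥ u - α) = -(R *ᵥ α) := by
    rw [mulVec_sub, hKEu, hRdef, sub_mulVec]; abel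
  have first : (K *ᵥ (E *ᵥ u - α)) ⬝ᵥ (K *ᵥ (E *ᵥ u - α)) = (R *ᵥ α) ⬝ᵥ (R *ᵥ α) := by
    rw [hKdu]; simp [neg_dotProduct, dotProduct_neg]
  have hEuR : (E *ᵥ u) ⬝ᵥ (R *ᵥ α) = 0 := by rw [hEdot, hERzero, dotProduct_zero]
  have second : (E *ᵥ u - α) ⬝ᵥ (K *ᵥ (E *ᵥ u - α)) = α ⬝ᵥ (R *ᵥ α) := by
    rw [hKdu]
    simp [sub_dotProduct, dotProduct_neg, hEuR]
  have hKdβ1 : (K *ᵥ (E *ᵥ β - α)) ⬝ᵥ (K *ᵥ (E *ᵥ β - α)) = (K *ᵥ δ) ⬝ᵥ (K *ᵥ δ) := by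
    rw [hnd]; simp [mulVec_neg, neg_dotProduct, dotProduct_neg]
  have hKdβ2 : (E *ᵥ β - α) ⬝ᵥ (K *ᵥ (E *ᵥ β - α)) = δ ⬝ᵥ (K *ᵥ δ) := by
    rw [hnd]; simp [mulVec_neg, neg_dotProduct, dotProduct_neg]
  rw [hKdβ1, hKdβ2] at hA1
  rw [first, second] at hA2
  have chain : (K *ᵥ δ) ⬝ᵥ (K *ᵥ δ) + lam * (δ ⬝ᵥ (K *ᵥ δ))
      ≤ (R *ᵥ α) ⬝ᵥ (R *ᵥ α) + lam * (α ⬝ᵥ (R *ᵥ α)) := by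
    linarith [hA1, hA2, keyB]
  have main : lam * (δ ⬝ᵥ (K *ᵥ δ)) ≤ (R *ᵥ α) ⬝ᵥ (R *ᵥ α) + lam * (α ⬝ᵥ (R *ᵥ α)) := by
    have := hdotself (K *ᵥ δ)
    linarith [chain]
  -- scalar bounds
  clear_value u
  clear_value α β δ E A G B Q R
  have haa0 : (0:ℝ) ≤ α ⬝ᵥ α := hdotself α
  have hY0 : (0:ℝ) ≤ y ⬝ᵥ y := hdotself y
  have hk0 : (0:ℝ) ≤ α ⬝ᵥ (K *ᵥ α) := by
    have := hK.posSemidef.dotProduct_mulVec_nonneg α; rwa [star_trivial] at this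
  have hq0 : (0:ℝ) ≤ α ⬝ᵥ (Q *ᵥ α) := by
    have := hQpsd.dotProduct_mulVec_nonneg α; rwa [star_trivial] at this
  have hs : α ⬝ᵥ y = α ⬝ᵥ (K *ᵥ α) + lam * (α ⬝ᵥ α) := by
    rw [← hy, dotProduct_add, dotProduct_smul, smul_eq_mul]
  have hCS : (α ⬝ᵥ y)^2 ≤ (α ⬝ᵥ α) * (y ⬝ᵥ y) := by
    have h := Finset.sum_mul_sq_le_sq_mul_sq Finset.univ α y
    simpa [dotProduct, sq] using h
  obtain ⟨haa, hk⟩ := scalar_bounds lam (α ⬝ᵥ α) (α ⬝ᵥ (K *ᵥ α)) (α ⬝ᵥ y) (y ⬝ᵥ y)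
    hlam hs hCS hk0 haa0 hY0
  have hr_eq : α ⬝ᵥ (R *ᵥ α) = α ⬝ᵥ (K *ᵥ α) - α ⬝ᵥ (Q *ᵥ α) := by
    rw [hRdef, sub_mulVec, dotProduct_sub]
  have hrk : α ⬝ᵥ (R *ᵥ α) ≤ α ⬝ᵥ (K *ᵥ α) := by rw [hr_eq]; linarith [hq0]
  have hr1 : lam * (α ⬝ᵥ (R *ᵥ α)) ≤ y ⬝ᵥ y := by
    have := mul_le_mul_of_nonneg_left hrk hlam.le
    linarith [hk]
  have ht : (0:ℝ) ≤ R.trace := psd_trace_nonneg hRpsd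
  have hr2 : α ⬝ᵥ (R *ᵥ α) ≤ R.trace * (α ⬝ᵥ α) := psd_quad_le_trace hRpsd α
  have hrr : (R *ᵥ α) ⬝ᵥ (R *ᵥ α) ≤ R.trace * (α ⬝ᵥ (R *ᵥ α)) := psd_sq_quad_le_trace hRpsd α
  -- final arithmetic
  rw [hQnys, ← hRdef, le_div_iff₀ (by positivity : (0:ℝ) < lam^2)]
  nlinarith [mul_le_mul_of_nonneg_left main hlam.le,
    mul_le_mul_of_nonneg_left hrr hlam.le,
    mul_le_mul_of_nonneg_left hr2 (mul_nonneg hlam.le hlam.le),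
    mul_le_mul_of_nonneg_left hr1 ht,
    mul_le_mul_of_nonneg_left haa ht]
end

section
/- Let K be a real symmetric positive definite n×n matrix, let e : Fin m → Fin n be injective, with K_CC := K∘(e,e), K_XC := K∘(id,e), K_CX := (K_XC)ᵀ, and Q := K_XC K_CC⁻¹ K_CX. For α ∈ ℝⁿ, set β := K_CC⁻¹ K_CX α and δ := α − ι(β), where ι extends β by zero (placing βⱼ at index e(j)). Then δᵀ K δ = αᵀ (K − Q) α. -/
open Matrix

section Aux

variable {n m : ℕ} (K : Matrix (Fin n) (Fin n) ℝ) (e : Fin m → Fin n)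

/-- The selection matrix `P` with `P i j = 1` iff `i = e j`. -/
noncomputable def selP : Matrix (Fin n) (Fin m) ℝ :=
  (1 : Matrix (Fin n) (Fin n) ℝ).submatrix id e

lemma extend_eq_selP_mulVec (he : Function.Injective e) (β : Fin m → ℝ) :
    Function.extend e β 0 = selP e *ᵥ β := by
  funext i
  by_cases h : ∃ j, e j = i
  · obtain ⟨j, rfl⟩ := h
    rw [he.extend_apply]
    simp [selP, mulVec, dotProduct, one_apply, he.eq_iff, eq_comm]
  · rw [Function.extend_apply' _ _ _ h]
    push_neg at h
    simp only [selP, mulVec, dotProduct, submatrix_apply, id_eq, one_apply]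
    rw [Finset.sum_eq_zero]
    · rfl
    intro j _
    simp [Ne.symm (h j)]

lemma mul_selP : K * selP e = KXC K e := by
  ext i j
  simp [selP, KXC, mul_apply, one_apply, Finset.sum_ite_eq]

lemma selP_transpose_mul_KXC : (selP e)ᵀ * KXC K e = KCC K e := by
  ext j j'
  simp only [selP, KXC, KCC, mul_apply, transpose_apply, submatrix_apply, id_eq, one_apply]
  rw [Finset.sum_eq_single (e j)]
  · simp
  · intro k _ hk
    simp only [ite_mul, one_mul, zero_mul, ite_eq_right_iff]
    exact fun h => absurd h hk
  · simp

lemma selP_transpose_mul (hK : K.IsHermitian) : (selP e)ᵀ * K = KCX K e := by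
  ext j i
  simp only [selP, KCX, KXC, mul_apply, transpose_apply, submatrix_apply, id_eq, one_apply]
  rw [Finset.sum_eq_single (e j)]
  · have h := congrFun (congrFun hK i) (e j)
    simp only [conjTranspose_apply, star_trivial] at h
    simp [h]
  · intro k _ hk
    simp only [ite_mul, one_mul, zero_mul, ite_eq_right_iff]
    exact fun h => absurd h hk
  · simp

lemma KCC_eq : KCC K e = (selP e)ᵀ * (K * selP e) := by
  rw [mul_selP, selP_transpose_mul_KXC]

lemma dot_selP (x : Fin m → ℝ) (w : Fin n → ℝ) :
    x ⬝ᵥ ((selP e)ᵀ *ᵥ w) = (selP e *ᵥ x) ⬝ᵥ w := by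
  rw [dotProduct_mulVec, vecMul_transpose]

lemma KCC_posDef (hK : K.PosDef) (he : Function.Injective e) : (KCC K e).PosDef := by
  refine Matrix.PosDef.of_dotProduct_mulVec_pos ?_ ?_
  · have h1 := hK.1
    ext j j'
    simpa [KCC, Matrix.IsHermitian] using (congrFun (congrFun h1 (e j')) (e j)).symm
  · intro x hx
    have hy : selP e *ᵥ x ≠ 0 := by
      rw [← extend_eq_selP_mulVec e he]
      intro h
      apply hx
      funext j
      have := congrFun h (e j)
      rwa [he.extend_apply, Pi.zero_apply] at this
    have hpos := hK.dotProduct_mulVec_pos hy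
    simp only [star_trivial] at hpos ⊢
    rw [KCC_eq, ← mulVec_mulVec, ← mulVec_mulVec, dot_selP]
    exact hpos

end Aux

/-- For a real symmetric positive definite matrix `K`, injective control
indices `e` and weights `α`, the projection residual `δ = α − ι(K_CC⁻¹ K_CX α)` (extension
by zero along `e`) satisfies the exact identity `δᵀ K δ = αᵀ (K − Q) α`, where `Q` is the
Nyström approximation of `K`. -/
theorem projection_residual_eq_nystrom_quadratic {n m : ℕ}
    (K : Matrix (Fin n) (Fin n) ℝ) (hK : K.PosDef)
    (e : Fin m → Fin n) (he : Function.Injective e)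
    (α : Fin n → ℝ) :
    let β := (KCC K e)⁻¹ *ᵥ (KCX K e *ᵥ α)
    let δ := α - Function.extend e β 0
    δ ⬝ᵥ (K *ᵥ δ) = α ⬝ᵥ ((K - nystrom K e) *ᵥ α) := by
  intro β δ
  have hβdef : β = (KCC K e)⁻¹ *ᵥ (KCX K e *ᵥ α) := rfl
  have hδdef : δ = α - Function.extend e β 0 := rfl
  clear_value β δ
  have hsym : K.IsHermitian := hK.1
  have hKCCunit : IsUnit (KCC K e).det :=
    (Matrix.isUnit_iff_isUnit_det _).mp (KCC_posDef K e hK he).isUnit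
  have hinv : KCC K e * (KCC K e)⁻¹ = 1 := Matrix.mul_nonsing_inv _ hKCCunit
  have hβ : KCC K e *ᵥ β = KCX K e *ᵥ α := by
    rw [hβdef, mulVec_mulVec, hinv, one_mulVec]
  have hδ : δ = α - selP e *ᵥ β := by
    rw [hδdef, extend_eq_selP_mulVec e he]
  have hX : α ⬝ᵥ (nystrom K e *ᵥ α) = α ⬝ᵥ (KXC K e *ᵥ β) := by
    rw [hβdef, nystrom, ← mulVec_mulVec, ← mulVec_mulVec]
  have hKXC_eq : KXC K e = (KCX K e)ᵀ := by
    rw [KCX, transpose_transpose]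
  have c1 : α ⬝ᵥ (KXC K e *ᵥ β) = β ⬝ᵥ (KCX K e *ᵥ α) := by
    rw [dotProduct_mulVec, hKXC_eq, vecMul_transpose, dotProduct_comm]
  have c2 : (selP e *ᵥ β) ⬝ᵥ (K *ᵥ α) = β ⬝ᵥ (KCX K e *ᵥ α) := by
    rw [← dot_selP, mulVec_mulVec, selP_transpose_mul K e hsym]
  have c3 : (selP e *ᵥ β) ⬝ᵥ (KXC K e *ᵥ β) = β ⬝ᵥ (KCX K e *ᵥ α) := by
    rw [← dot_selP, mulVec_mulVec, selP_transpose_mul_KXC, hβ]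
  rw [hδ, Matrix.mulVec_sub, mulVec_mulVec, mul_selP, sub_dotProduct,
    dotProduct_sub, dotProduct_sub, c1, c2, c3, Matrix.sub_mulVec, dotProduct_sub, hX, c1]
  ring
end

section
/- Let K be a real symmetric positive definite n×n matrix, μ > 0, and let e : Fin m → Fin n be injective, with K_CC := K∘(e,e), K_XC := K∘(id,e), K_CX := (K_XC)ᵀ, and Q := K_XC K_CC⁻¹ K_CX. Let A be a real n×d matrix with columns α₁,…,α_d ∈ ℝⁿ. For each j define ỹⱼ := (K + μI) αⱼ, βⱼ := (K_CX K_XC + μ K_CC)⁻¹ K_CX ỹⱼ, and δⱼ := αⱼ − ι(βⱼ), where ι extends by zero along e. Then Σⱼ₌₁^d δⱼᵀ K δⱼ ≤ (2/μ²) · (Σⱼ₌₁^d ‖ỹⱼ‖²) · tr(K − Q). -/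
open Matrix

namespace FieldTraceAux

lemma dotsymm {p : ℕ} (A : Matrix (Fin p) (Fin p) ℝ) (hA : Aᵀ = A) (x y : Fin p → ℝ) :
    x ⬝ᵥ (A *ᵥ y) = y ⬝ᵥ (A *ᵥ x) := by
  rw [dotProduct_mulVec, ← vecMul_transpose, hA, dotProduct_comm]

lemma dottrans {p q : ℕ} (A : Matrix (Fin p) (Fin q) ℝ) (x : Fin p → ℝ) (w : Fin q → ℝ) :
    x ⬝ᵥ (A *ᵥ w) = (Aᵀ *ᵥ x) ⬝ᵥ w := by
  rw [dotProduct_mulVec, mulVec_transpose]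

lemma frob {p q : ℕ} (N : Matrix (Fin p) (Fin q) ℝ) (x : Fin q → ℝ) :
    (N *ᵥ x) ⬝ᵥ (N *ᵥ x) ≤ (∑ i, ∑ j, N i j ^ 2) * (x ⬝ᵥ x) := by
  have h : ∀ i : Fin p, (N *ᵥ x) i * (N *ᵥ x) i ≤ (∑ j, N i j ^ 2) * (x ⬝ᵥ x) := by
    intro i
    have h2 := Finset.sum_mul_sq_le_sq_mul_sq Finset.univ (fun j => N i j) x
    simpa [mulVec, dotProduct, sq] using h2
  calc (N *ᵥ x) ⬝ᵥ (N *ᵥ x) = ∑ i, (N *ᵥ x) i * (N *ᵥ x) i := rfl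
    _ ≤ ∑ i, (∑ j, N i j ^ 2) * (x ⬝ᵥ x) := Finset.sum_le_sum (fun i _ => h i)
    _ = (∑ i, ∑ j, N i j ^ 2) * (x ⬝ᵥ x) := (Finset.sum_mul _ _ _).symm

lemma tracett {p q : ℕ} (N : Matrix (Fin p) (Fin q) ℝ) :
    (Nᵀ * N).trace = ∑ i, ∑ j, N i j ^ 2 := by
  simp [Matrix.trace, Matrix.mul_apply, Matrix.diag, sq]
  rw [Finset.sum_comm]

lemma dotnn {p : ℕ} (v : Fin p → ℝ) : 0 ≤ v ⬝ᵥ v :=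
  Finset.sum_nonneg fun i _ => mul_self_nonneg _

variable {n m : ℕ}

noncomputable def Cmat (e : Fin m → Fin n) : Matrix (Fin n) (Fin m) ℝ :=
  Matrix.of fun i j => if e j = i then 1 else 0

lemma hKC (K : Matrix (Fin n) (Fin n) ℝ) (e : Fin m → Fin n) : K * Cmat e = KXC K e := by
  ext i j
  simp [Cmat, Matrix.mul_apply, KXC]

lemma hext (e : Fin m → Fin n) (he : Function.Injective e) (b : Fin m → ℝ) :
    Cmat e *ᵥ b = Function.extend e b 0 := by
  ext i
  by_cases h : ∃ j, e j = i
  · obtain ⟨j0, rfl⟩ := h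
    rw [Function.Injective.extend_apply he]
    simp [Cmat, mulVec, dotProduct, he.eq_iff]
  · rw [Function.extend_apply' _ _ _ (by simpa using h)]
    have : ∀ j, e j ≠ i := by simpa using h
    simp [Cmat, mulVec, dotProduct, this]

lemma hCtK (K : Matrix (Fin n) (Fin n) ℝ) (e : Fin m → Fin n) (hs : Kᵀ = K) :
    (Cmat e)ᵀ * K = KCX K e := by
  ext j i
  simp only [Matrix.mul_apply, Cmat, transpose_apply, KCX, KXC, Matrix.of_apply,
    Matrix.submatrix_apply, id_eq]
  rw [Finset.sum_eq_single (e j) (fun b _ hb => by simp [Ne.symm hb]) (by simp)]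
  have hsym := congrFun (congrFun hs i) (e j)
  simp only [transpose_apply] at hsym
  simp [hsym]

lemma hCtKC (K : Matrix (Fin n) (Fin n) ℝ) (e : Fin m → Fin n) :
    (Cmat e)ᵀ * KXC K e = KCC K e := by
  ext j j'
  simp only [Matrix.mul_apply, Cmat, transpose_apply, KCC, KXC, Matrix.of_apply,
    Matrix.submatrix_apply, id_eq]
  rw [Finset.sum_eq_single (e j) (fun b _ hb => by simp [Ne.symm hb]) (by simp)]
  simp

set_option maxHeartbeats 1000000 in
lemma key (K : Matrix (Fin n) (Fin n) ℝ) (hK : K.PosDef) (μ : ℝ) (hμ : 0 < μ)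
    (e : Fin m → Fin n) (he : Function.Injective e) (α y : Fin n → ℝ)
    (hy : y = (K + μ • (1 : Matrix (Fin n) (Fin n) ℝ)) *ᵥ α) :
    (α - Function.extend e ((KCX K e * KXC K e + μ • KCC K e)⁻¹ *ᵥ (KCX K e *ᵥ y)) 0) ⬝ᵥ
      (K *ᵥ (α - Function.extend e ((KCX K e * KXC K e + μ • KCC K e)⁻¹ *ᵥ (KCX K e *ᵥ y)) 0))
      ≤ 2 / μ ^ 2 * (y ⬝ᵥ y) * (K - nystrom K e).trace := by
  have hs : Kᵀ = K := by
    have h := hK.isHermitian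
    rw [Matrix.IsHermitian] at h
    simpa using h
  set C := Cmat e with hCdef
  have hkc : K * C = KXC K e := hKC K e
  have hck : Cᵀ * K = KCX K e := hCtK K e hs
  have hckc : Cᵀ * KXC K e = KCC K e := hCtKC K e
  -- positive definiteness of K_CC
  have hCCpd : (KCC K e).PosDef := by
    refine Matrix.PosDef.of_dotProduct_mulVec_pos ?_ ?_
    · exact hK.isHermitian.submatrix e
    · intro x hx
      have hCx : C *ᵥ x ≠ 0 := by
        intro h0
        apply hx
        ext j
        have h1 := congrFun h0 (e j)
        rw [hext e he x] at h1
        simpa [Function.Injective.extend_apply he] using h1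
      have hrw : x ⬝ᵥ (KCC K e *ᵥ x) = (C *ᵥ x) ⬝ᵥ (K *ᵥ (C *ᵥ x)) := by
        rw [← hckc, ← hkc, ← Matrix.mul_assoc, ← mulVec_mulVec, ← mulVec_mulVec,
          dottrans, transpose_transpose]
      have := hK.dotProduct_mulVec_pos hCx
      simpa [hrw] using this
  have hCCdet : IsUnit (KCC K e).det := isUnit_iff_ne_zero.2 hCCpd.det_pos.ne'
  -- positive definiteness of G
  have hGpd : (KCX K e * KXC K e + μ • KCC K e).PosDef := by
    apply Matrix.PosDef.posSemidef_add
    · have hKCXeq : KCX K e = (KXC K e)ᴴ := by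
        ext i j; simp [KCX]
      rw [hKCXeq]
      exact Matrix.posSemidef_conjTranspose_mul_self _
    · refine Matrix.PosDef.of_dotProduct_mulVec_pos ?_ ?_
      · show (μ • KCC K e)ᴴ = μ • KCC K e
        rw [conjTranspose_smul, hCCpd.isHermitian.eq, star_trivial]
      · intro x hx
        have := hCCpd.dotProduct_mulVec_pos hx
        simp only [smul_mulVec, dotProduct_smul, smul_eq_mul]
        exact mul_pos hμ this
  have hGdet : IsUnit (KCX K e * KXC K e + μ • KCC K e).det :=
    isUnit_iff_ne_zero.2 hGpd.det_pos.ne'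
  set β := (KCX K e * KXC K e + μ • KCC K e)⁻¹ *ᵥ (KCX K e *ᵥ y) with hβ
  set b := (KCC K e)⁻¹ *ᵥ (KCX K e *ᵥ α) with hb
  rw [← hext e he β, ← hCdef]
  set δ := α - C *ᵥ β with hδ
  set g := α - C *ᵥ b with hg
  have hGβ : (KCX K e * KXC K e + μ • KCC K e) *ᵥ β = KCX K e *ᵥ y := by
    rw [hβ, mulVec_mulVec, Matrix.mul_nonsing_inv _ hGdet, one_mulVec]
  have hCCb : KCC K e *ᵥ b = KCX K e *ᵥ α := by
    rw [hb, mulVec_mulVec, Matrix.mul_nonsing_inv _ hCCdet, one_mulVec]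
  have hKCXC : KCX K e * C = KCC K e := by
    rw [← hck, Matrix.mul_assoc, hkc, hckc]
  have hKg : K *ᵥ g = (K - nystrom K e) *ᵥ α := by
    rw [hg, mulVec_sub, sub_mulVec]
    congr 1
    rw [mulVec_mulVec, hkc, hb, mulVec_mulVec, mulVec_mulVec]
    simp only [nystrom]
  have hKCXg : KCX K e *ᵥ g = 0 := by
    rw [hg, mulVec_sub, mulVec_mulVec, hKCXC, hCCb, sub_self]
  have hortho : (C *ᵥ b) ⬝ᵥ (K *ᵥ g) = 0 := by
    rw [dotProduct_comm, dottrans, mulVec_mulVec, hck, hKCXg, zero_dotProduct]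
  have expandF : ∀ u w : Fin n → ℝ,
      (K *ᵥ u - y) ⬝ᵥ (K *ᵥ u - y) + μ * (u ⬝ᵥ (K *ᵥ u))
        = ((K *ᵥ w - y) ⬝ᵥ (K *ᵥ w - y) + μ * (w ⬝ᵥ (K *ᵥ w)))
          + (K *ᵥ (u - w)) ⬝ᵥ (K *ᵥ (u - w)) + μ * ((u - w) ⬝ᵥ (K *ᵥ (u - w)))
          + 2 * ((u - w) ⬝ᵥ (K *ᵥ (K *ᵥ w - y) + μ • (K *ᵥ w))) := by
    intro u w
    have h1 := dotsymm K hs u w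
    have h2 := dotsymm K hs u (K *ᵥ w)
    have h3 := dotsymm K hs u y
    have h4 := dotsymm K hs w y
    have h5 := dotProduct_comm u y
    have h6 := dotProduct_comm w y
    have h7 := dotProduct_comm (K *ᵥ u) y
    have h8 := dotProduct_comm (K *ᵥ w) y
    have h9 := dotProduct_comm (K *ᵥ u) (K *ᵥ w)
    simp only [mulVec_sub, mulVec_add, dotProduct_sub, sub_dotProduct, dotProduct_add,
      add_dotProduct, dotProduct_smul, smul_eq_mul, mulVec_smul]
    have h10 := dotsymm K hs w (K *ᵥ w)
    linear_combination h9 - 2*h2 + 2*h10 + 2*h3 - 2*h4 - h7 + h8 - μ*h1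
  have hgKg : g ⬝ᵥ (K *ᵥ g) = α ⬝ᵥ ((K - nystrom K e) *ᵥ α) := by
    conv_lhs => rw [hg]
    rw [sub_dotProduct, hortho, sub_zero, hKg]
  -- residual identities at the full minimizer
  have hKay : K *ᵥ α - y = -(μ • α) := by
    rw [hy, add_mulVec, smul_mulVec, one_mulVec]
    abel
  have hcross0 : K *ᵥ (K *ᵥ α - y) + μ • (K *ᵥ α) = 0 := by
    rw [hKay, mulVec_neg, mulVec_smul]
    abel
  -- inequality 1 : F α + μ δKδ ≤ F (C β)
  have h1 := expandF (C *ᵥ β) α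
  rw [hcross0] at h1
  have hβδ : C *ᵥ β - α = -δ := by rw [hδ]; abel
  rw [hβδ] at h1
  simp only [mulVec_neg, neg_dotProduct, dotProduct_neg, neg_neg, dotProduct_zero,
    mul_zero, add_zero] at h1
  -- inequality 3 (exact value at the projected candidate)
  have h3 := expandF (C *ᵥ b) α
  rw [hcross0] at h3
  have hbg : C *ᵥ b - α = -g := by rw [hg]; abel
  rw [hbg] at h3
  simp only [mulVec_neg, neg_dotProduct, dotProduct_neg, neg_neg, dotProduct_zero,
    mul_zero, add_zero] at h3
  rw [hgKg, hKg] at h3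
  -- inequality 2 : F (C β) ≤ F (C b)
  have hKCb : K *ᵥ (C *ᵥ β) = KXC K e *ᵥ β := by rw [mulVec_mulVec, hkc]
  have hGβ' : (KCX K e * KXC K e) *ᵥ β + μ • (KCC K e *ᵥ β) = KCX K e *ᵥ y := by
    rw [← hGβ, add_mulVec, smul_mulVec]
  have hCKv : ∀ v : Fin n → ℝ, Cᵀ *ᵥ (K *ᵥ v) = KCX K e *ᵥ v := fun v => by
    rw [mulVec_mulVec, hck]
  have hcrossβ : Cᵀ *ᵥ (K *ᵥ (K *ᵥ (C *ᵥ β) - y) + μ • (K *ᵥ (C *ᵥ β))) = 0 := by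
    rw [hKCb, mulVec_add, mulVec_smul, hCKv, mulVec_mulVec β Cᵀ (KXC K e), hckc,
      mulVec_sub, mulVec_mulVec, ← hGβ']
    abel
  have hcr2 : (C *ᵥ b - C *ᵥ β) ⬝ᵥ (K *ᵥ (K *ᵥ (C *ᵥ β) - y) + μ • (K *ᵥ (C *ᵥ β))) = 0 := by
    rw [← mulVec_sub, dotProduct_comm, dottrans, hcrossβ, zero_dotProduct]
  have h2 := expandF (C *ᵥ b) (C *ᵥ β)
  rw [hcr2] at h2
  simp only [mul_zero, add_zero] at h2
  have hq2nn : 0 ≤ (C *ᵥ b - C *ᵥ β) ⬝ᵥ (K *ᵥ (C *ᵥ b - C *ᵥ β)) := by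
    have := hK.posSemidef.dotProduct_mulVec_nonneg (C *ᵥ b - C *ᵥ β)
    simpa using this
  -- chain
  have hchain : μ * (δ ⬝ᵥ (K *ᵥ δ)) ≤
      ((K - nystrom K e) *ᵥ α) ⬝ᵥ ((K - nystrom K e) *ᵥ α)
        + μ * (α ⬝ᵥ ((K - nystrom K e) *ᵥ α)) := by
    linarith [h1, h2, h3, dotnn (K *ᵥ δ), dotnn (K *ᵥ (C *ᵥ b - C *ᵥ β)),
      mul_nonneg hμ.le hq2nn]
  -- square root and projection
  set S := (open scoped MatrixOrder in CFC.sqrt K) with hSdef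
  have hSS : S * S = K := by
    open scoped MatrixOrder in exact CFC.sqrt_mul_sqrt_self K hK.posSemidef.nonneg
  have hSsymm : Sᵀ = S := by
    have h : S.IsHermitian := by
      open scoped MatrixOrder in exact (CFC.sqrt_nonneg K).posSemidef.isHermitian
    rw [Matrix.IsHermitian] at h
    simpa using h
  set P := S * C * (KCC K e)⁻¹ * (Cᵀ * S) with hP
  set N := S - P * S with hN
  have hCCT : (KCC K e)ᵀ = KCC K e := by
    have h := hCCpd.isHermitian
    rw [Matrix.IsHermitian] at h
    simpa using h
  have hCCinvT : ((KCC K e)⁻¹)ᵀ = (KCC K e)⁻¹ := by rw [transpose_nonsing_inv, hCCT]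
  have hPt : Pᵀ = P := by
    rw [hP]
    simp only [transpose_mul, transpose_transpose, hSsymm, hCCinvT, Matrix.mul_assoc]
  have hCSSC : Cᵀ * S * (S * C) = KCC K e := by
    rw [Matrix.mul_assoc Cᵀ S (S * C), ← Matrix.mul_assoc S S C, hSS, hkc, hckc]
  have hPP : P * P = P := by
    have hmid : (KCC K e)⁻¹ * (Cᵀ * S * (S * C)) * (KCC K e)⁻¹ = (KCC K e)⁻¹ := by
      rw [hCSSC, Matrix.nonsing_inv_mul _ hCCdet, Matrix.one_mul]
    calc P * P = S * C * ((KCC K e)⁻¹ * (Cᵀ * S * (S * C)) * (KCC K e)⁻¹) * (Cᵀ * S) := by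
          rw [hP]; simp only [Matrix.mul_assoc]
      _ = P := by rw [hmid, hP]
  have h2' : S * (S * C) = KXC K e := by rw [← Matrix.mul_assoc, hSS, hkc]
  have h3' : Cᵀ * S * S = KCX K e := by rw [Matrix.mul_assoc, hSS, hck]
  have hSPS : S * P * S = nystrom K e := by
    rw [hP]
    simp only [nystrom]
    rw [← h2', ← h3']
    simp only [Matrix.mul_assoc]
  have hNtN : Nᵀ * N = K - nystrom K e := by
    have hA1 : S * (P * S) = nystrom K e := by rw [← Matrix.mul_assoc]; exact hSPS
    have hA2 : S * P * (P * S) = nystrom K e := by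
      rw [Matrix.mul_assoc S P (P * S), ← Matrix.mul_assoc P P S, hPP, ← Matrix.mul_assoc]
      exact hSPS
    rw [hN, transpose_sub, transpose_mul, hSsymm, hPt, Matrix.sub_mul, Matrix.mul_sub,
      Matrix.mul_sub, hSS, hA1, hA2, hSPS]
    abel
  -- trace bounds
  set τ := ∑ i, ∑ j, N i j ^ 2 with hτdef
  have htr : (K - nystrom K e).trace = τ := by
    rw [← hNtN, tracett, hτdef]
  have hτ0 : 0 ≤ τ := by
    rw [hτdef]
    exact Finset.sum_nonneg fun i _ => Finset.sum_nonneg fun j _ => sq_nonneg _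
  have hMv : (K - nystrom K e) *ᵥ α = Nᵀ *ᵥ (N *ᵥ α) := by rw [mulVec_mulVec, hNtN]
  have hquad : α ⬝ᵥ ((K - nystrom K e) *ᵥ α) = (N *ᵥ α) ⬝ᵥ (N *ᵥ α) := by
    rw [hMv, dottrans, transpose_transpose]
  have hτT : (∑ i, ∑ j, Nᵀ i j ^ 2) = τ := by
    simp only [transpose_apply]
    rw [hτdef, Finset.sum_comm]
  have hb1 : ((K - nystrom K e) *ᵥ α) ⬝ᵥ ((K - nystrom K e) *ᵥ α) ≤
      τ * (α ⬝ᵥ ((K - nystrom K e) *ᵥ α)) := by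
    rw [hquad, hMv]
    have := frob Nᵀ (N *ᵥ α)
    rwa [hτT] at this
  have hb2 : α ⬝ᵥ ((K - nystrom K e) *ᵥ α) ≤ τ * (α ⬝ᵥ α) := by
    rw [hquad]; exact frob N α
  have hb3 : α ⬝ᵥ ((K - nystrom K e) *ᵥ α) ≤ α ⬝ᵥ (K *ᵥ α) := by
    rw [sub_mulVec, dotProduct_sub]
    have hq : 0 ≤ α ⬝ᵥ (nystrom K e *ᵥ α) := by
      have hny : nystrom K e *ᵥ α = KXC K e *ᵥ ((KCC K e)⁻¹ *ᵥ (KCX K e *ᵥ α)) := by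
        simp only [nystrom, ← mulVec_mulVec]
      rw [hny, dottrans]
      have hKXCT : (KXC K e)ᵀ = KCX K e := rfl
      rw [hKXCT]
      have := hCCpd.inv.posSemidef.dotProduct_mulVec_nonneg (KCX K e *ᵥ α)
      simpa using this
    linarith
  -- scalar endgame
  have hαy : α ⬝ᵥ y = α ⬝ᵥ (K *ᵥ α) + μ * (α ⬝ᵥ α) := by
    rw [hy, add_mulVec, smul_mulVec, one_mulVec, dotProduct_add, dotProduct_smul,
      smul_eq_mul]
  have hCS : (α ⬝ᵥ y) ^ 2 ≤ (α ⬝ᵥ α) * (y ⬝ᵥ y) := by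
    have := Finset.sum_mul_sq_le_sq_mul_sq Finset.univ α y
    simpa [dotProduct, sq] using this
  have hαKα : 0 ≤ α ⬝ᵥ (K *ᵥ α) := by
    have := hK.posSemidef.dotProduct_mulVec_nonneg α
    simpa using this
  have hynn : 0 ≤ y ⬝ᵥ y := dotnn y
  have hααn : 0 ≤ α ⬝ᵥ α := dotnn α
  have hμs : μ * (α ⬝ᵥ y) ≤ y ⬝ᵥ y := by
    have hps : μ * (α ⬝ᵥ α) ≤ α ⬝ᵥ y := by linarith [hαy, hαKα]
    rcases le_or_gt (α ⬝ᵥ y) 0 with hsy | hsy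
    · nlinarith [mul_nonpos_of_nonneg_of_nonpos hμ.le hsy]
    · nlinarith [mul_le_mul_of_nonneg_left hCS hμ.le, mul_le_mul_of_nonneg_right hps hynn, hsy]
  have hmain : μ * (δ ⬝ᵥ (K *ᵥ δ)) ≤ τ * (α ⬝ᵥ y) := by
    have A1 := mul_le_mul_of_nonneg_left hb3 hτ0
    have A2 := mul_le_mul_of_nonneg_left hb2 hμ.le
    have A3 : τ * (α ⬝ᵥ y) = τ * (α ⬝ᵥ (K *ᵥ α)) + μ * (τ * (α ⬝ᵥ α)) := by
      rw [hαy]; ring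
    linarith [hchain, hb1, A1, A2, A3]
  rw [htr]
  have hμ2 : (0:ℝ) < μ ^ 2 := pow_pos hμ 2
  have hfin : 2 / μ ^ 2 * (y ⬝ᵥ y) * τ = 2 * ((y ⬝ᵥ y) * τ) / μ ^ 2 := by ring
  rw [hfin, le_div_iff₀ hμ2]
  have B1 := mul_le_mul_of_nonneg_left hmain hμ.le
  have B2 := mul_le_mul_of_nonneg_left hμs hτ0
  nlinarith [B1, B2, mul_nonneg hynn hτ0]



end FieldTraceAux

/-- (Matrix form of Lemma 6.1.) For a real symmetric positive definite
matrix `K`, `μ > 0`, injective control indices `e` and an `n × d` weight matrix `A`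
with columns `αⱼ`, setting `ỹⱼ = (K + μI) αⱼ`, `βⱼ = (K_CX K_XC + μ K_CC)⁻¹ K_CX ỹⱼ`
and `δⱼ = αⱼ − ι(βⱼ)` (extension by zero along `e`), one has
`∑ⱼ δⱼᵀ K δⱼ ≤ (2/μ²) · (∑ⱼ ‖ỹⱼ‖²) · tr(K − Q)`. -/
theorem field_trace_approx {n m d : ℕ}
    (K : Matrix (Fin n) (Fin n) ℝ) (hK : K.PosDef)
    (μ : ℝ) (hμ : 0 < μ)
    (e : Fin m → Fin n) (he : Function.Injective e)
    (A : Matrix (Fin n) (Fin d) ℝ) :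
    let α : Fin d → Fin n → ℝ := fun j i => A i j
    let ytil : Fin d → Fin n → ℝ :=
      fun j => (K + μ • (1 : Matrix (Fin n) (Fin n) ℝ)) *ᵥ α j
    let β : Fin d → Fin m → ℝ :=
      fun j => (KCX K e * KXC K e + μ • KCC K e)⁻¹ *ᵥ (KCX K e *ᵥ ytil j)
    let δ : Fin d → Fin n → ℝ := fun j => α j - Function.extend e (β j) 0
    ∑ j : Fin d, δ j ⬝ᵥ (K *ᵥ δ j) ≤
      2 / μ ^ 2 * (∑ j : Fin d, ytil j ⬝ᵥ ytil j) * (K - nystrom K e).trace := by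
  intro α ytil β δ
  have hstep : ∀ j, δ j ⬝ᵥ (K *ᵥ δ j) ≤
      2 / μ ^ 2 * (ytil j ⬝ᵥ ytil j) * (K - nystrom K e).trace :=
    fun j => FieldTraceAux.key K hK μ hμ e he (α j) (ytil j) rfl
  calc ∑ j : Fin d, δ j ⬝ᵥ (K *ᵥ δ j)
      ≤ ∑ j : Fin d, 2 / μ ^ 2 * (ytil j ⬝ᵥ ytil j) * (K - nystrom K e).trace :=
        Finset.sum_le_sum fun j _ => hstep j
    _ = 2 / μ ^ 2 * (∑ j : Fin d, ytil j ⬝ᵥ ytil j) * (K - nystrom K e).trace := by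
        rw [← Finset.sum_mul, ← Finset.mul_sum]
end

section
/- Let K be a real symmetric positive definite n×n matrix and let 1 ≤ m < n. For a subset S ⊆ {1,…,n} with |S| = m, let K_S denote the principal submatrix of K on S, and let Q_S := K_{XS} K_S⁻¹ K_{SX} be the Nyström approximation based on S. Let λ₁ ≥ λ₂ ≥ … ≥ λₙ denote the eigenvalues of K in decreasing order. Then Σ_{S : |S|=m} det(K_S) · ‖K − Q_S‖₂ ≤ Σ_{S : |S|=m} det(K_S) · tr(K − Q_S) ≤ (m+1) · (Σ_{i=m+1}^{n} λᵢ) · Σ_{S : |S|=m} det(K_S). -/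
open Matrix

noncomputable section

/-- The principal submatrix `K_S` of `K` on the index set `S`. -/
def principalSub {n : ℕ} (K : Matrix (Fin n) (Fin n) ℝ) (S : Finset (Fin n)) :
    Matrix ↥S ↥S ℝ :=
  K.submatrix (fun i : ↥S => (i : Fin n)) (fun i : ↥S => (i : Fin n))

/-- The Nyström approximation `Q_S = K_{XS} ⬝ K_S⁻¹ ⬝ K_{SX}` of `K` based on the
control-index set `S`. -/
def nystromS {n : ℕ} (K : Matrix (Fin n) (Fin n) ℝ) (S : Finset (Fin n)) :
    Matrix (Fin n) (Fin n) ℝ :=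
  K.submatrix id (fun i : ↥S => (i : Fin n)) * (principalSub K S)⁻¹ *
    (K.submatrix id (fun i : ↥S => (i : Fin n)))ᵀ

end

lemma principalSub_posDef {n : ℕ} {K : Matrix (Fin n) (Fin n) ℝ} (hK : K.PosDef)
    (S : Finset (Fin n)) : (principalSub K S).PosDef := by
  refine posDef_iff_dotProduct_mulVec.mpr ⟨?_, ?_⟩
  · have := hK.1
    unfold principalSub
    ext i j
    simp only [conjTranspose_apply, submatrix_apply]
    exact congrFun (congrFun this.symm _) _ |>.symm ▸ by
      simpa using congrFun (congrFun this _) _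
  · intro x hx
    classical
    set y : Fin n → ℝ := fun i => if h : i ∈ S then x ⟨i, h⟩ else 0 with hy
    have hy0 : y ≠ 0 := by
      intro h
      apply hx
      ext ⟨i, hi⟩
      have := congrFun h i
      simpa [hy, hi] using this
    have := hK.dotProduct_mulVec_pos hy0
    convert this using 1
    simp only [dotProduct, mulVec, principalSub, submatrix_apply, RCLike.re_to_real]
    have hyS : ∀ (s : ↥S), y (s : Fin n) = x s := fun s => by simp [hy, s.2]
    have inner : ∀ i : Fin n, ∑ j, K i j * y j = ∑ t : ↥S, K i (t : Fin n) * x t := by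
      intro i
      calc ∑ j, K i j * y j = ∑ j ∈ S, K i j * y j :=
            (Finset.sum_subset (Finset.subset_univ S)
              (fun j _ hj => by simp [hy, hj])).symm
        _ = ∑ j : ↥S, K i (j : Fin n) * y (j : Fin n) := (Finset.sum_coe_sort _ _).symm
        _ = ∑ t : ↥S, K i (t : Fin n) * x t := Finset.sum_congr rfl fun j _ => by rw [hyS]
    calc ∑ s : ↥S, star x s * ∑ t : ↥S, K (s : Fin n) (t : Fin n) * x t
        = ∑ s : ↥S, y (s : Fin n) * ∑ j, K (s : Fin n) j * y j := by
          refine Finset.sum_congr rfl fun s _ => ?_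
          rw [hyS, inner, star_trivial]
      _ = ∑ i ∈ S, y i * ∑ j, K i j * y j := Finset.sum_coe_sort S (fun i => y i * ∑ j, K i j * y j)
      _ = ∑ i : Fin n, y i * ∑ j, K i j * y j :=
          Finset.sum_subset (Finset.subset_univ S) (fun i _ hi => by simp [hy, hi])
      _ = ∑ i : Fin n, star y i * ∑ j, K i j * y j := by simp

lemma posDef_symm_apply {n : ℕ} {K : Matrix (Fin n) (Fin n) ℝ} (hK : K.PosDef)
    (a b : Fin n) : K a b = K b a := by
  conv_lhs => rw [← hK.1]
  simp [conjTranspose_apply]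

lemma principalSub_det_pos {n : ℕ} {K : Matrix (Fin n) (Fin n) ℝ} (hK : K.PosDef)
    (S : Finset (Fin n)) : 0 < (principalSub K S).det :=
  (principalSub_posDef hK S).det_pos

lemma principalSub_isUnit_det {n : ℕ} {K : Matrix (Fin n) (Fin n) ℝ} (hK : K.PosDef)
    (S : Finset (Fin n)) : IsUnit (principalSub K S).det :=
  isUnit_iff_ne_zero.mpr (principalSub_det_pos hK S).ne'

lemma nystromS_apply_mem {n : ℕ} {K : Matrix (Fin n) (Fin n) ℝ} (hK : K.PosDef)
    {S : Finset (Fin n)} {i : Fin n} (hi : i ∈ S) (j : Fin n) :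
    nystromS K S i j = K i j := by
  classical
  set A := principalSub K S with hA
  have hinv : A * A⁻¹ = 1 := Matrix.mul_nonsing_inv _ (principalSub_isUnit_det hK S)
  set s : ↥S := ⟨i, hi⟩
  have hrow : ∀ u : ↥S, (∑ t : ↥S, K i (t : Fin n) * A⁻¹ t u) = (1 : Matrix ↥S ↥S ℝ) s u := by
    intro u
    rw [← hinv, Matrix.mul_apply]
    rfl
  simp only [nystromS, Matrix.mul_apply, transpose_apply, submatrix_apply, id]
  calc ∑ u : ↥S, (∑ t : ↥S, K i (t : Fin n) * A⁻¹ t u) * K j (u : Fin n)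
      = ∑ u : ↥S, (1 : Matrix ↥S ↥S ℝ) s u * K j (u : Fin n) := by
        exact Finset.sum_congr rfl fun u _ => by rw [hrow]
    _ = K j i := by
        rw [Finset.sum_eq_single s]
        · simp; rfl
        · intro b _ hb; simp [Matrix.one_apply, (by simpa [eq_comm] using hb : ¬ s = b)]
        · intro h; exact absurd (Finset.mem_univ s) h
    _ = K i j := posDef_symm_apply hK j i

def insertEquiv {n : ℕ} (S : Finset (Fin n)) (i : Fin n) (hi : i ∉ S) :
    (↥S ⊕ Unit) ≃ ↥(insert i S) where
  toFun := fun x => match x with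
    | Sum.inl s => ⟨s, Finset.mem_insert_of_mem s.2⟩
    | Sum.inr _ => ⟨i, Finset.mem_insert_self i S⟩
  invFun := fun t => if h : (t : Fin n) ∈ S then Sum.inl ⟨t, h⟩ else Sum.inr ()
  left_inv := by
    rintro (s | u)
    · simp [s.2]
    · simp [hi]
  right_inv := by
    rintro ⟨t, ht⟩
    rcases Finset.mem_insert.mp ht with h | h
    · subst h; simp [hi]
    · simp [h]

lemma principalSub_insert_blocks {n : ℕ} (K : Matrix (Fin n) (Fin n) ℝ)
    {S : Finset (Fin n)} {i : Fin n} (hi : i ∉ S) :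
    (principalSub K (insert i S)).submatrix (insertEquiv S i hi) (insertEquiv S i hi) =
      fromBlocks (principalSub K S) (fun s (_ : Unit) => K s i)
        (fun (_ : Unit) s => K i s) (fun _ _ => K i i) := by
  ext x y
  cases x <;> cases y <;> rfl

lemma det_principalSub_insert {n : ℕ} {K : Matrix (Fin n) (Fin n) ℝ} (hK : K.PosDef)
    {S : Finset (Fin n)} {i : Fin n} (hi : i ∉ S) :
    (principalSub K (insert i S)).det =
      (principalSub K S).det * (K - nystromS K S) i i := by
  classical
  haveI : Invertible (principalSub K S) :=
    (principalSub K S).invertibleOfIsUnitDet (principalSub_isUnit_det hK S)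
  rw [← Matrix.det_submatrix_equiv_self (insertEquiv S i hi),
    principalSub_insert_blocks K hi]
  erw [Matrix.det_fromBlocks₁₁]
  congr 1
  rw [Matrix.det_unique]
  simp only [Matrix.sub_apply, Matrix.mul_apply, Matrix.invOf_eq_nonsing_inv]
  simp only [nystromS, Matrix.mul_apply, transpose_apply, submatrix_apply, id]
  show K i i - ∑ j : ↥S, (∑ t : ↥S, K i (t : Fin n) * (principalSub K S)⁻¹ t j) * K (j : Fin n) i = _
  congr 1
  exact Finset.sum_congr rfl fun u _ => by rw [posDef_symm_apply hK (u : Fin n) i]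

open scoped MatrixOrder Matrix.Norms.L2Operator in
lemma psd_sqrt_exists {n : ℕ} {M : Matrix (Fin n) (Fin n) ℝ} (hM : M.PosSemidef) :
    ∃ L : Matrix (Fin n) (Fin n) ℝ, L.PosSemidef ∧ L * L = M :=
  ⟨CFC.sqrt M, (CFC.sqrt_nonneg M).posSemidef, CFC.sqrt_mul_sqrt_self M hM.nonneg⟩

lemma sub_nystromS_posSemidef {n : ℕ} {K : Matrix (Fin n) (Fin n) ℝ} (hK : K.PosDef)
    (S : Finset (Fin n)) : (K - nystromS K S).PosSemidef := by
  classical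
  obtain ⟨L, hL, hLL⟩ : ∃ L : Matrix (Fin n) (Fin n) ℝ, L.PosSemidef ∧ L * L = K :=
    psd_sqrt_exists hK.posSemidef
  have hLsymm : ∀ a b, L a b = L b a := by
    intro a b; conv_lhs => rw [← hL.1]
    simp [conjTranspose_apply]
  set B : Matrix (Fin n) ↥S ℝ := L.submatrix id (fun s : ↥S => (s : Fin n)) with hBdef
  have hC : K.submatrix id (fun s : ↥S => (s : Fin n)) = L * B := by
    ext i s
    rw [← hLL]
    simp [Matrix.mul_apply, hBdef]
  have hA : principalSub K S = Bᴴ * B := by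
    ext s t
    rw [principalSub, submatrix_apply, ← hLL]
    simp only [Matrix.mul_apply, hBdef, conjTranspose_apply, submatrix_apply, id,
      star_trivial]
    exact Finset.sum_congr rfl fun k _ => by rw [hLsymm (s : Fin n) k]
  set A := principalSub K S with hAdef
  have hU : IsUnit A.det := principalSub_isUnit_det hK S
  have hAinv : A⁻¹ * A = 1 := Matrix.nonsing_inv_mul _ hU
  have hAherm : Aᴴ = A := (principalSub_posDef hK S).1
  set P : Matrix (Fin n) (Fin n) ℝ := B * A⁻¹ * Bᴴ with hPdef
  have hPherm : Pᴴ = P := by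
    rw [hPdef]
    simp only [conjTranspose_mul, conjTranspose_conjTranspose, Matrix.conjTranspose_nonsing_inv,
      hAherm]
    rw [Matrix.mul_assoc]
  have hPP : P * P = P := by
    rw [hPdef]
    calc B * A⁻¹ * Bᴴ * (B * A⁻¹ * Bᴴ) = B * A⁻¹ * (Bᴴ * B) * A⁻¹ * Bᴴ := by
          simp only [Matrix.mul_assoc]
      _ = B * (A⁻¹ * (Bᴴ * B) * A⁻¹) * Bᴴ := by simp only [Matrix.mul_assoc]
      _ = B * A⁻¹ * Bᴴ := by rw [← hA, hAinv, Matrix.one_mul]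
  have hQ : nystromS K S = L * P * L := by
    rw [nystromS, ← hAdef, hC, hPdef]
    have hCT : (L * B)ᵀ = Bᴴ * L := by
      rw [Matrix.transpose_mul, ← Matrix.conjTranspose_eq_transpose_of_trivial B,
        ← Matrix.conjTranspose_eq_transpose_of_trivial L, hL.1]
    rw [hCT]
    simp only [Matrix.mul_assoc]
  have key : K - nystromS K S = ((1 - P) * L)ᴴ * ((1 - P) * L) := by
    have h1P : (1 - P)ᴴ = 1 - P := by
      rw [conjTranspose_sub, hPherm, conjTranspose_one]
    rw [conjTranspose_mul, h1P, hL.1]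
    calc K - nystromS K S = L * L - L * (P * L) := by rw [hLL, hQ, Matrix.mul_assoc]
      _ = L * ((1 - P) * ((1 - P) * L)) := by
        have e1 : (1 - P) * L = L - P * L := by rw [Matrix.sub_mul, Matrix.one_mul]
        have e3 : (1 - P) * (P * L) = 0 := by
          rw [Matrix.sub_mul, Matrix.one_mul, ← Matrix.mul_assoc, hPP, sub_self]
        have e2 : (1 - P) * (L - P * L) = L - P * L := by
          rw [Matrix.mul_sub, e1, e3, sub_zero]
        rw [e1, e2, Matrix.mul_sub]
      _ = L * (1 - P) * ((1 - P) * L) := by rw [Matrix.mul_assoc]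
  rw [key]
  exact Matrix.posSemidef_conjTranspose_mul_self _

set_option maxHeartbeats 1000000 in
open scoped Matrix.Norms.L2Operator in
lemma norm_toEuclideanCLM_le_trace {n : ℕ} {M : Matrix (Fin n) (Fin n) ℝ}
    (hM : M.PosSemidef) : ‖Matrix.toEuclideanCLM (𝕜 := ℝ) M‖ ≤ M.trace := by
  classical
  obtain ⟨L, hL, hLL⟩ : ∃ L : Matrix (Fin n) (Fin n) ℝ, L.PosSemidef ∧ Lᴴ * L = M :=
    by obtain ⟨L, hL, hLL⟩ := psd_sqrt_exists hM; exact ⟨L, hL, by rw [hL.1]; exact hLL⟩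
  have hLsymm : ∀ a b, L a b = L b a := by
    intro a b; conv_lhs => rw [← hL.1]; simp [conjTranspose_apply]
  have htr : M.trace = ∑ i, ∑ j, (L i j) ^ 2 := by
    rw [← hLL, Matrix.trace]
    refine Finset.sum_congr rfl fun i _ => ?_
    simp only [Matrix.diag_apply, Matrix.mul_apply, conjTranspose_apply, star_trivial]
    exact Finset.sum_congr rfl fun j _ => by rw [hLsymm i j]; ring
  have htrnn : 0 ≤ M.trace := by
    rw [htr]
    exact Finset.sum_nonneg fun i _ => Finset.sum_nonneg fun j _ => sq_nonneg _
  have hLnorm : ‖Matrix.toEuclideanCLM (𝕜 := ℝ) L‖ ≤ Real.sqrt M.trace := by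
    refine ContinuousLinearMap.opNorm_le_bound _ (Real.sqrt_nonneg _) fun x => ?_
    have happ : ∀ i, (Matrix.toEuclideanCLM (𝕜 := ℝ) L x) i = ∑ j, L i j * x j := by
      intro i
      have h := congrFun (Matrix.ofLp_toEuclideanCLM (𝕜 := ℝ) L x) i
      simpa [Matrix.toLin'_apply, Matrix.mulVec, dotProduct] using h
    rw [EuclideanSpace.norm_eq, EuclideanSpace.norm_eq]
    have hxn : ∀ i, ‖x i‖ ^ 2 = (x i) ^ 2 := fun i => by rw [Real.norm_eq_abs, sq_abs]
    have step : ∑ i, ‖(Matrix.toEuclideanCLM (𝕜 := ℝ) L x) i‖ ^ 2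
        ≤ M.trace * ∑ i, ‖x i‖ ^ 2 := by
      rw [htr, Finset.sum_mul]
      refine Finset.sum_le_sum fun i _ => ?_
      rw [happ, Real.norm_eq_abs, sq_abs]
      calc (∑ j, L i j * x j) ^ 2 ≤ (∑ j, (L i j) ^ 2) * ∑ j, (x j) ^ 2 :=
            Finset.sum_mul_sq_le_sq_mul_sq _ _ _
        _ = (∑ j, (L i j) ^ 2) * ∑ j, ‖x j‖ ^ 2 := by
            congr 1
            exact Finset.sum_congr rfl fun j _ => (hxn j).symm
    calc Real.sqrt (∑ i, ‖(Matrix.toEuclideanCLM (𝕜 := ℝ) L x) i‖ ^ 2)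
        ≤ Real.sqrt (M.trace * ∑ i, ‖x i‖ ^ 2) := Real.sqrt_le_sqrt step
      _ = Real.sqrt M.trace * Real.sqrt (∑ i, ‖x i‖ ^ 2) := Real.sqrt_mul htrnn _
  have hMnorm : ‖Matrix.toEuclideanCLM (𝕜 := ℝ) M‖
      = ‖Matrix.toEuclideanCLM (𝕜 := ℝ) L‖ * ‖Matrix.toEuclideanCLM (𝕜 := ℝ) L‖ := by
    rw [← Matrix.cstar_norm_def, ← Matrix.cstar_norm_def, ← hLL]
    exact Matrix.l2_opNorm_conjTranspose_mul_self L
  calc ‖Matrix.toEuclideanCLM (𝕜 := ℝ) M‖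
      = ‖Matrix.toEuclideanCLM (𝕜 := ℝ) L‖ * ‖Matrix.toEuclideanCLM (𝕜 := ℝ) L‖ := hMnorm
    _ ≤ Real.sqrt M.trace * Real.sqrt M.trace := by
        refine mul_le_mul hLnorm hLnorm (norm_nonneg _) (Real.sqrt_nonneg _)
    _ = M.trace := Real.mul_self_sqrt htrnn

lemma det_mul_trace_eq {n : ℕ} {K : Matrix (Fin n) (Fin n) ℝ} (hK : K.PosDef)
    (S : Finset (Fin n)) :
    (principalSub K S).det * (K - nystromS K S).trace
      = ∑ i ∈ Sᶜ, (principalSub K (insert i S)).det := by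
  classical
  have hdiag : ∀ i ∈ S, (K - nystromS K S) i i = 0 := fun i hi => by
    simp [Matrix.sub_apply, nystromS_apply_mem hK hi]
  have htr : (K - nystromS K S).trace = ∑ i ∈ Sᶜ, (K - nystromS K S) i i := by
    rw [Matrix.trace]
    symm
    refine Finset.sum_subset (Finset.subset_univ _) fun i _ hi => ?_
    exact hdiag i (by simpa using hi)
  rw [htr, Finset.mul_sum]
  exact Finset.sum_congr rfl fun i hi =>
    (det_principalSub_insert hK (Finset.mem_compl.mp hi)).symm

lemma sum_sum_insert_eq {n m : ℕ} (f : Finset (Fin n) → ℝ) :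
    ∑ S ∈ Finset.powersetCard m (Finset.univ : Finset (Fin n)), ∑ i ∈ Sᶜ, f (insert i S)
      = ((m : ℝ) + 1) * ∑ T ∈ Finset.powersetCard (m + 1) (Finset.univ : Finset (Fin n)), f T := by
  classical
  rw [← Finset.sum_sigma (Finset.powersetCard m (Finset.univ : Finset (Fin n)))
    (fun S => Sᶜ) (fun p => f (insert p.2 p.1))]
  rw [show ((m : ℝ) + 1) * ∑ T ∈ Finset.powersetCard (m + 1) (Finset.univ : Finset (Fin n)), f T
      = ∑ T ∈ Finset.powersetCard (m + 1) (Finset.univ : Finset (Fin n)), ∑ _i ∈ T, f T by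
    rw [Finset.mul_sum]
    refine Finset.sum_congr rfl fun T hT => ?_
    rw [Finset.sum_const, Finset.mem_powersetCard_univ.mp hT, nsmul_eq_mul]
    push_cast; ring]
  rw [← Finset.sum_sigma (Finset.powersetCard (m + 1) (Finset.univ : Finset (Fin n)))
    (fun T => T) (fun q => f q.1)]
  refine Finset.sum_nbij' (fun p => ⟨insert p.2 p.1, p.2⟩) (fun q => ⟨q.1.erase q.2, q.2⟩)
    ?_ ?_ ?_ ?_ ?_
  · rintro ⟨S, i⟩ hp
    rw [Finset.mem_sigma] at hp ⊢
    obtain ⟨hS, hi⟩ := hp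
    rw [Finset.mem_compl] at hi
    refine ⟨Finset.mem_powersetCard_univ.mpr ?_, Finset.mem_insert_self _ _⟩
    rw [Finset.card_insert_of_notMem hi, Finset.mem_powersetCard_univ.mp hS]
  · rintro ⟨T, i⟩ hq
    rw [Finset.mem_sigma] at hq ⊢
    obtain ⟨hT, hi⟩ := hq
    refine ⟨Finset.mem_powersetCard_univ.mpr ?_, ?_⟩
    · rw [Finset.card_erase_of_mem hi, Finset.mem_powersetCard_univ.mp hT]
      omega
    · simp [Finset.mem_compl]
  · rintro ⟨S, i⟩ hp
    rw [Finset.mem_sigma] at hp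
    obtain ⟨_, hi⟩ := hp
    rw [Finset.mem_compl] at hi
    simp [Finset.erase_insert hi]
  · rintro ⟨T, i⟩ hq
    rw [Finset.mem_sigma] at hq
    simp [Finset.insert_erase hq.2]
  · rintro ⟨S, i⟩ _
    rfl

lemma det_piecewise_one {ι : Type*} [Fintype ι] [DecidableEq ι] {R : Type*} [CommRing R]
    (A : Matrix ι ι R) (S : Finset ι) :
    Matrix.det (Matrix.of (S.piecewise (fun i => A i) (fun i => (1 : Matrix ι ι R) i)))
      = (A.submatrix (fun i : ↥S => (i : ι)) (fun i : ↥S => (i : ι))).det := by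
  classical
  let e : {x // x ∈ S} ⊕ {x : ι // ¬ x ∈ S} ≃ ι := Equiv.sumCompl (· ∈ S)
  rw [← Matrix.det_submatrix_equiv_self e]
  have hblocks : (Matrix.of (S.piecewise (fun i => A i)
        (fun i => (1 : Matrix ι ι R) i))).submatrix e e =
      Matrix.fromBlocks (A.submatrix (fun i : ↥S => (i : ι)) (fun i : ↥S => (i : ι)))
        (Matrix.of fun (s : ↥S) (t : {x : ι // ¬ x ∈ S}) => A (s : ι) (t : ι))
        0 1 := by
    ext x y
    cases x with
    | inl s =>
      cases y with
      | inl t =>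
        simp only [e, Matrix.submatrix_apply, Equiv.sumCompl_apply_inl, Matrix.of_apply,
          Finset.piecewise_eq_of_mem _ _ _ s.2, Matrix.fromBlocks_apply₁₁,
          Matrix.submatrix_apply]
      | inr t =>
        simp only [e, Matrix.submatrix_apply, Equiv.sumCompl_apply_inl, Equiv.sumCompl_apply_inr,
          Matrix.of_apply, Finset.piecewise_eq_of_mem _ _ _ s.2, Matrix.fromBlocks_apply₁₂]
    | inr s =>
      cases y with
      | inl t =>
        have hne : (s : ι) ≠ (t : ι) := fun h => s.2 (h ▸ t.2)
        simp only [e, Matrix.submatrix_apply, Equiv.sumCompl_apply_inr, Equiv.sumCompl_apply_inl,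
          Matrix.of_apply, Finset.piecewise_eq_of_notMem _ _ _ s.2,
          Matrix.fromBlocks_apply₂₁, Matrix.one_apply_ne hne, Matrix.zero_apply]
      | inr t =>
        simp only [e, Matrix.submatrix_apply, Equiv.sumCompl_apply_inr, Matrix.of_apply,
          Finset.piecewise_eq_of_notMem _ _ _ s.2, Matrix.fromBlocks_apply₂₂,
          Matrix.one_apply, Subtype.coe_inj]
  rw [hblocks, Matrix.det_fromBlocks_zero₂₁, Matrix.det_one, mul_one]

open Polynomial in
lemma det_one_add_X_smul_eq_sum_minors {n : ℕ} (K : Matrix (Fin n) (Fin n) ℝ) :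
    Matrix.det (1 + (X : ℝ[X]) • K.map C)
      = ∑ s : Finset (Fin n), C ((K.submatrix (fun i : ↥s => (i : Fin n))
          (fun i : ↥s => (i : Fin n))).det) * X ^ s.card := by
  classical
  have h1 : (1 + (X : ℝ[X]) • K.map C) = Matrix.of
      ((fun i => ((X : ℝ[X]) • K.map C) i) + (fun i => (1 : Matrix (Fin n) (Fin n) ℝ[X]) i)) := by
    ext i j
    simp [add_comm]
  rw [h1]
  have h2 := (Matrix.detRowAlternating (R := ℝ[X]) (n := Fin n)).toMultilinearMap.map_add_univ
    (fun i => ((X : ℝ[X]) • K.map C) i) (fun i => (1 : Matrix (Fin n) (Fin n) ℝ[X]) i)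
  have hdet : Matrix.det (Matrix.of ((fun i => ((X : ℝ[X]) • K.map C) i)
      + (fun i => (1 : Matrix (Fin n) (Fin n) ℝ[X]) i)))
      = ∑ s : Finset (Fin n), Matrix.det (Matrix.of (s.piecewise
          (fun i => ((X : ℝ[X]) • K.map C) i) (fun i => (1 : Matrix (Fin n) (Fin n) ℝ[X]) i))) :=
    h2
  rw [hdet]
  refine Finset.sum_congr rfl fun s _ => ?_
  rw [det_piecewise_one ((X : ℝ[X]) • K.map C) s]
  have hsub : ((X : ℝ[X]) • K.map C).submatrix (fun i : ↥s => (i : Fin n))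
      (fun i : ↥s => (i : Fin n))
      = (X : ℝ[X]) • ((K.submatrix (fun i : ↥s => (i : Fin n))
          (fun i : ↥s => (i : Fin n))).map C) := rfl
  rw [hsub, Matrix.det_smul, Fintype.card_coe, mul_comm]
  congr 1
  rw [RingHom.map_det, RingHom.mapMatrix_apply]

open Polynomial in
lemma det_one_add_X_smul_eq_esymm {n : ℕ} {K : Matrix (Fin n) (Fin n) ℝ} (hK : K.IsHermitian) :
    Matrix.det (1 + (X : ℝ[X]) • K.map C)
      = ∑ s : Finset (Fin n), C (∏ i ∈ s, hK.eigenvalues i) * X ^ s.card := by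
  classical
  set μ := hK.eigenvalues with hμ
  set V : Matrix (Fin n) (Fin n) ℝ := (hK.eigenvectorUnitary : Matrix (Fin n) (Fin n) ℝ)
    with hV
  have hspec : K = V * Matrix.diagonal (RCLike.ofReal ∘ μ) * star V := hK.spectral_theorem
  have hVW : V * star V = 1 := (Matrix.mem_unitaryGroup_iff).mp hK.eigenvectorUnitary.2
  have hdiagR : Matrix.diagonal (RCLike.ofReal ∘ μ) = Matrix.diagonal μ := by
    congr 1
  have hmap : (1 : Matrix (Fin n) (Fin n) ℝ[X]) + (X : ℝ[X]) • K.map C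
      = V.map C * (1 + (X : ℝ[X]) • (Matrix.diagonal μ).map C) * (star V).map C := by
    rw [Matrix.mul_add, Matrix.add_mul, Matrix.mul_one, ← Matrix.map_mul, hVW,
      Matrix.map_one C C.map_zero C.map_one]
    congr 1
    rw [Matrix.mul_smul, Matrix.smul_mul, ← Matrix.map_mul, ← Matrix.map_mul]
    congr 2
  rw [hmap, Matrix.det_mul, Matrix.det_mul]
  have hdetVW : Matrix.det (V.map C) * Matrix.det ((star V).map C) = 1 := by
    rw [← Matrix.det_mul, ← Matrix.map_mul, hVW, Matrix.map_one C C.map_zero C.map_one,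
      Matrix.det_one]
  have hrearr : ∀ a b c : ℝ[X], a * b * c = b * (a * c) := fun a b c => by ring
  rw [hrearr, hdetVW, mul_one]
  have hdiagpoly : (1 : Matrix (Fin n) (Fin n) ℝ[X]) + (X : ℝ[X]) • (Matrix.diagonal μ).map C
      = Matrix.diagonal (fun i => 1 + C (μ i) * X) := by
    ext i j
    by_cases h : i = j
    · subst h
      simp only [Matrix.add_apply, Matrix.smul_apply, Matrix.map_apply,
        Matrix.diagonal_apply_eq, Matrix.one_apply_eq, smul_eq_mul]
      ring
    · simp only [Matrix.add_apply, Matrix.smul_apply, Matrix.map_apply,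
        Matrix.diagonal_apply_ne _ h, Matrix.one_apply_ne h, map_zero, smul_eq_mul,
        mul_zero, add_zero]
  rw [hdiagpoly, Matrix.det_diagonal]
  have hprod : ∏ i, (1 + C (μ i) * X) = ∏ i, (C (μ i) * X + 1) := by
    exact Finset.prod_congr rfl fun i _ => by ring
  rw [hprod, Finset.prod_add]
  rw [Finset.powerset_univ]
  refine Finset.sum_congr rfl fun s _ => ?_
  simp only [Finset.prod_const_one, mul_one]
  rw [Finset.prod_mul_distrib, Finset.prod_const, ← map_prod]

open Polynomial in
lemma sum_minors_eq_esymm {n : ℕ} {K : Matrix (Fin n) (Fin n) ℝ} (hK : K.IsHermitian)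
    (k : ℕ) :
    ∑ S ∈ Finset.powersetCard k (Finset.univ : Finset (Fin n)), (principalSub K S).det
      = ∑ S ∈ Finset.powersetCard k (Finset.univ : Finset (Fin n)),
          ∏ i ∈ S, hK.eigenvalues i := by
  classical
  have hpoly := (det_one_add_X_smul_eq_sum_minors K).symm.trans
    (det_one_add_X_smul_eq_esymm hK)
  have hcoeff := congrArg (fun p : ℝ[X] => p.coeff k) hpoly
  simp only [Polynomial.finset_sum_coeff, Polynomial.coeff_C_mul,
    Polynomial.coeff_X_pow, mul_ite, mul_one, mul_zero] at hcoeff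
  have hfilter : ∀ f : Finset (Fin n) → ℝ,
      (∑ s : Finset (Fin n), if k = s.card then f s else 0)
        = ∑ S ∈ Finset.powersetCard k (Finset.univ : Finset (Fin n)), f S := by
    intro f
    rw [Finset.powersetCard_eq_filter, Finset.powerset_univ]
    rw [Finset.sum_filter]
    exact Finset.sum_congr rfl fun s _ => by
      by_cases h : k = s.card
      · rw [if_pos h, if_pos h.symm]
      · rw [if_neg h, if_neg (fun hh => h hh.symm)]
  rw [← hfilter (fun s => (principalSub K s).det),
    ← hfilter (fun s => ∏ i ∈ s, hK.eigenvalues i)]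
  exact hcoeff

lemma esymm_perm_invariant {n k : ℕ} (μ lam : Fin n → ℝ) (σ : Equiv.Perm (Fin n))
    (h : ∀ i, lam i = μ (σ i)) :
    ∑ S ∈ Finset.powersetCard k (Finset.univ : Finset (Fin n)), ∏ i ∈ S, lam i
      = ∑ S ∈ Finset.powersetCard k (Finset.univ : Finset (Fin n)), ∏ i ∈ S, μ i := by
  classical
  refine Finset.sum_nbij' (fun S => S.image σ) (fun S => S.image σ.symm) ?_ ?_ ?_ ?_ ?_
  · intro S hS
    rw [Finset.mem_powersetCard_univ] at hS ⊢
    rw [Finset.card_image_of_injective _ σ.injective, hS]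
  · intro S hS
    rw [Finset.mem_powersetCard_univ] at hS ⊢
    rw [Finset.card_image_of_injective _ σ.symm.injective, hS]
  · intro S _
    simp [Finset.image_image]
  · intro S _
    simp [Finset.image_image]
  · intro S _
    rw [Finset.prod_image (fun a _ b _ hab => σ.injective hab)]
    exact Finset.prod_congr rfl fun i _ => h i

lemma esymm_tail_bound {n m : ℕ} (hmn : m < n) (lam : Fin n → ℝ)
    (hnn : ∀ i, 0 ≤ lam i) :
    ∑ T ∈ Finset.powersetCard (m + 1) (Finset.univ : Finset (Fin n)), ∏ i ∈ T, lam i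
      ≤ (∑ i ∈ Finset.univ.filter (fun i : Fin n => m ≤ (i : ℕ)), lam i) *
          ∑ S ∈ Finset.powersetCard m (Finset.univ : Finset (Fin n)), ∏ i ∈ S, lam i := by
  classical
  have hn0 : 0 < n := lt_of_le_of_lt (Nat.zero_le m) hmn
  set F : Finset (Fin n) := Finset.univ.filter (fun i : Fin n => m ≤ (i : ℕ)) with hF
  set P : Finset (Finset (Fin n)) :=
    Finset.powersetCard m (Finset.univ : Finset (Fin n)) with hP
  set g : Finset (Fin n) → Fin n × Finset (Fin n) := fun T =>
    if h : T.Nonempty then (T.max' h, T.erase (T.max' h)) else (⟨0, hn0⟩, ∅) with hg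
  have hne : ∀ T ∈ Finset.powersetCard (m + 1) (Finset.univ : Finset (Fin n)),
      T.Nonempty := fun T hT => Finset.card_pos.mp
    (by rw [Finset.mem_powersetCard_univ.mp hT]; omega)
  have hgval : ∀ T (h : T.Nonempty), g T = (T.max' h, T.erase (T.max' h)) := by
    intro T h; rw [hg]; simp [h]
  have hstep1 : ∑ T ∈ Finset.powersetCard (m + 1) (Finset.univ : Finset (Fin n)), ∏ i ∈ T, lam i
      = ∑ T ∈ Finset.powersetCard (m + 1) (Finset.univ : Finset (Fin n)),
          lam (g T).1 * ∏ i ∈ (g T).2, lam i := by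
    refine Finset.sum_congr rfl fun T hT => ?_
    rw [hgval T (hne T hT)]
    exact (Finset.mul_prod_erase T lam (T.max'_mem (hne T hT))).symm
  have hinj : ∀ x ∈ Finset.powersetCard (m + 1) (Finset.univ : Finset (Fin n)),
      ∀ y ∈ Finset.powersetCard (m + 1) (Finset.univ : Finset (Fin n)), g x = g y → x = y := by
    intro x hx y hy hxy
    rw [hgval x (hne x hx), hgval y (hne y hy)] at hxy
    have h1 := congrArg Prod.fst hxy
    have h2 := congrArg Prod.snd hxy
    simp only at h1 h2
    have ex : x = insert (x.max' (hne x hx)) (x.erase (x.max' (hne x hx))) :=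
      (Finset.insert_erase (x.max'_mem (hne x hx))).symm
    have ey : y = insert (y.max' (hne y hy)) (y.erase (y.max' (hne y hy))) :=
      (Finset.insert_erase (y.max'_mem (hne y hy))).symm
    calc x = insert (x.max' (hne x hx)) (x.erase (x.max' (hne x hx))) := ex
      _ = insert (y.max' (hne y hy)) (y.erase (y.max' (hne y hy))) := by rw [h2, h1]
      _ = y := ey.symm
  have hsub : (Finset.powersetCard (m + 1) (Finset.univ : Finset (Fin n))).image g ⊆ F ×ˢ P := by
    intro p hp
    rw [Finset.mem_image] at hp
    obtain ⟨T, hT, rfl⟩ := hp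
    have hTne := hne T hT
    rw [hgval T hTne, Finset.mem_product]
    dsimp only
    constructor
    · rw [hF, Finset.mem_filter]
      refine ⟨Finset.mem_univ _, ?_⟩
      -- m ≤ max'
      have hsub2 : T.image (Fin.val) ⊆ Finset.range ((T.max' hTne : ℕ) + 1) := by
        intro a ha
        rw [Finset.mem_image] at ha
        obtain ⟨b, hb, rfl⟩ := ha
        rw [Finset.mem_range]
        exact Nat.lt_succ_of_le (Finset.le_max' T b hb)
      have hcard : (T.image (Fin.val)).card = m + 1 := by
        rw [Finset.card_image_of_injective _ Fin.val_injective,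
          Finset.mem_powersetCard_univ.mp hT]
      have := Finset.card_le_card hsub2
      rw [hcard, Finset.card_range] at this
      omega
    · rw [hP, Finset.mem_powersetCard_univ, Finset.card_erase_of_mem (T.max'_mem hTne),
        Finset.mem_powersetCard_univ.mp hT]
      omega
  calc ∑ T ∈ Finset.powersetCard (m + 1) (Finset.univ : Finset (Fin n)), ∏ i ∈ T, lam i
      = ∑ T ∈ Finset.powersetCard (m + 1) (Finset.univ : Finset (Fin n)),
          lam (g T).1 * ∏ i ∈ (g T).2, lam i := hstep1
    _ = ∑ p ∈ (Finset.powersetCard (m + 1) (Finset.univ : Finset (Fin n))).image g,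
          lam p.1 * ∏ i ∈ p.2, lam i :=
        (Finset.sum_image (f := fun p : Fin n × Finset (Fin n) => lam p.1 * ∏ i ∈ p.2, lam i)
          hinj).symm
    _ ≤ ∑ p ∈ F ×ˢ P, lam p.1 * ∏ i ∈ p.2, lam i := by
        refine Finset.sum_le_sum_of_subset_of_nonneg hsub fun p _ _ => ?_
        exact mul_nonneg (hnn _) (Finset.prod_nonneg fun i _ => hnn i)
    _ = (∑ i ∈ F, lam i) * ∑ S ∈ P, ∏ i ∈ S, lam i := by
        rw [Finset.sum_mul_sum, Finset.sum_product]

/-- (Theorem 4.2, unnormalized m-DPP bound.) Let `K` be real symmetric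
positive definite, `1 ≤ m < n`, and let `λ₁ ≥ … ≥ λₙ` be the eigenvalues of `K` in
decreasing order (`lam` is a sorted rearrangement of the eigenvalues of `K`). Then
`∑_{|S|=m} det(K_S) ‖K − Q_S‖₂ ≤ ∑_{|S|=m} det(K_S) tr(K − Q_S)
  ≤ (m+1) (∑_{i=m+1}^n λᵢ) ∑_{|S|=m} det(K_S)`. -/
theorem dpp_nystrom_error_bound {n m : ℕ} (hm : 1 ≤ m) (hmn : m < n)
    (K : Matrix (Fin n) (Fin n) ℝ) (hK : K.PosDef)
    (lam : Fin n → ℝ)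
    (hsorted : ∀ i j : Fin n, i ≤ j → lam j ≤ lam i)
    (heig : ∃ σ : Equiv.Perm (Fin n), ∀ i, lam i = hK.1.eigenvalues (σ i)) :
    (∑ S ∈ Finset.powersetCard m (Finset.univ : Finset (Fin n)),
        (principalSub K S).det * ‖Matrix.toEuclideanCLM (𝕜 := ℝ) (K - nystromS K S)‖
      ≤ ∑ S ∈ Finset.powersetCard m (Finset.univ : Finset (Fin n)),
          (principalSub K S).det * (K - nystromS K S).trace) ∧
    (∑ S ∈ Finset.powersetCard m (Finset.univ : Finset (Fin n)),
          (principalSub K S).det * (K - nystromS K S).trace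
      ≤ ((m : ℝ) + 1) * (∑ i ∈ Finset.univ.filter (fun i : Fin n => m ≤ (i : ℕ)), lam i) *
          ∑ S ∈ Finset.powersetCard m (Finset.univ : Finset (Fin n)),
            (principalSub K S).det) := by
  classical
  obtain ⟨σ, hσ⟩ := heig
  have hlamnn : ∀ i, 0 ≤ lam i := fun i => by
    rw [hσ i]; exact hK.posSemidef.eigenvalues_nonneg _
  constructor
  · refine Finset.sum_le_sum fun S _ => ?_
    exact mul_le_mul_of_nonneg_left
      (norm_toEuclideanCLM_le_trace (sub_nystromS_posSemidef hK S))
      (le_of_lt (principalSub_det_pos hK S))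
  · calc ∑ S ∈ Finset.powersetCard m (Finset.univ : Finset (Fin n)),
          (principalSub K S).det * (K - nystromS K S).trace
        = ∑ S ∈ Finset.powersetCard m (Finset.univ : Finset (Fin n)),
            ∑ i ∈ Sᶜ, (principalSub K (insert i S)).det :=
          Finset.sum_congr rfl fun S _ => det_mul_trace_eq hK S
      _ = ((m : ℝ) + 1) * ∑ T ∈ Finset.powersetCard (m + 1) (Finset.univ : Finset (Fin n)),
            (principalSub K T).det :=
          sum_sum_insert_eq (fun T => (principalSub K T).det)
      _ = ((m : ℝ) + 1) * ∑ T ∈ Finset.powersetCard (m + 1) (Finset.univ : Finset (Fin n)),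
            ∏ i ∈ T, lam i := by
          rw [sum_minors_eq_esymm hK.1 (m + 1),
            esymm_perm_invariant hK.1.eigenvalues lam σ hσ]
      _ ≤ ((m : ℝ) + 1) * ((∑ i ∈ Finset.univ.filter (fun i : Fin n => m ≤ (i : ℕ)), lam i) *
            ∑ S ∈ Finset.powersetCard m (Finset.univ : Finset (Fin n)), ∏ i ∈ S, lam i) := by
          refine mul_le_mul_of_nonneg_left (esymm_tail_bound hmn lam hlamnn) ?_
          positivity
      _ = ((m : ℝ) + 1) * (∑ i ∈ Finset.univ.filter (fun i : Fin n => m ≤ (i : ℕ)), lam i) *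
            ∑ S ∈ Finset.powersetCard m (Finset.univ : Finset (Fin n)),
              (principalSub K S).det := by
          rw [esymm_perm_invariant hK.1.eigenvalues lam σ hσ, ← sum_minors_eq_esymm hK.1 m,
            mul_assoc]
end

section
/- Let K be a real symmetric positive definite n×n matrix, let e : Fin m → Fin n be injective, and let Q := K_XC K_CC⁻¹ K_CX be the Nyström approximation (K_CC := K∘(e,e), K_XC := K∘(id,e), K_CX := (K_XC)ᵀ). Then for every α ∈ ℝⁿ, setting β := K_CC⁻¹ K_CX α and δ := α − ι(β) (ι the extension by zero along e), one has δᵀ K δ ≤ ‖α‖² · tr(K − Q). -/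
open Matrix

namespace ProjAux

open Matrix

variable {n m : ℕ}

/-- The selection matrix. -/
def P (e : Fin m → Fin n) : Matrix (Fin n) (Fin m) ℝ :=
  (1 : Matrix (Fin n) (Fin n) ℝ).submatrix id e

lemma P_apply (e : Fin m → Fin n) (i : Fin n) (k : Fin m) :
    P e i k = if i = e k then 1 else 0 := by
  simp [P, Matrix.one_apply]

lemma dot_trans {a b : ℕ} (A : Matrix (Fin a) (Fin b) ℝ) (x : Fin a → ℝ) (y : Fin b → ℝ) :
    x ⬝ᵥ (A *ᵥ y) = (Aᵀ *ᵥ x) ⬝ᵥ y := by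
  rw [Matrix.dotProduct_mulVec, ← Matrix.mulVec_transpose]

lemma dot_trans' {a b : ℕ} (A : Matrix (Fin a) (Fin b) ℝ) (x : Fin b → ℝ) (y : Fin a → ℝ) :
    (A *ᵥ x) ⬝ᵥ y = x ⬝ᵥ (Aᵀ *ᵥ y) := by
  rw [dot_trans, Matrix.transpose_transpose]

lemma P_mulVec {e : Fin m → Fin n} (he : Function.Injective e) (β : Fin m → ℝ) :
    P e *ᵥ β = Function.extend e β 0 := by
  funext i
  simp only [Matrix.mulVec, dotProduct, P_apply]
  by_cases h : ∃ k, e k = i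
  · obtain ⟨k, rfl⟩ := h
    rw [he.extend_apply]
    rw [Finset.sum_eq_single k]
    · simp
    · intro k' _ hk'
      have : e k ≠ e k' := fun hc => hk' (he hc.symm)
      simp [this]
    · simp
  · rw [Function.extend_apply' _ _ _ h]
    refine Finset.sum_eq_zero fun k _ => ?_
    have : i ≠ e k := fun hc => h ⟨k, hc.symm⟩
    simp [this]

lemma mul_P (K : Matrix (Fin n) (Fin n) ℝ) (e : Fin m → Fin n) :
    K * P e = KXC K e := by
  ext i k
  simp [Matrix.mul_apply, P_apply, KXC, Finset.sum_ite_eq']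

lemma Pt_mul_KXC (K : Matrix (Fin n) (Fin n) ℝ) (e : Fin m → Fin n) :
    (P e)ᵀ * KXC K e = KCC K e := by
  ext k l
  simp [Matrix.mul_apply, P_apply, KXC, KCC, Finset.sum_ite_eq]

variable {K : Matrix (Fin n) (Fin n) ℝ} {e : Fin m → Fin n}

lemma Kt (hK : K.PosDef) : Kᵀ = K := by
  ext i j
  have := congrFun (congrFun hK.1 i) j
  simpa using this

lemma KCC_posDef (hK : K.PosDef) (he : Function.Injective e) : (KCC K e).PosDef := by
  refine Matrix.PosDef.of_dotProduct_mulVec_pos ?_ ?_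
  · ext k l
    have := congrFun (congrFun hK.1 (e k)) (e l)
    simpa [KCC] using this
  · intro x hx
    have hP : P e *ᵥ x ≠ 0 := by
      intro hc
      apply hx
      funext k
      have := congrFun ((P_mulVec he x).symm.trans hc) (e k)
      rwa [he.extend_apply] at this
    have h0 := hK.dotProduct_mulVec_pos hP
    have key : star (P e *ᵥ x) ⬝ᵥ (K *ᵥ (P e *ᵥ x)) = star x ⬝ᵥ (KCC K e *ᵥ x) := by
      simp only [star_trivial]
      rw [Matrix.mulVec_mulVec, mul_P, dot_trans' (P e) x,
        Matrix.mulVec_mulVec, Pt_mul_KXC]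
    rw [← key]
    exact h0

lemma KCC_mul_inv (hK : K.PosDef) (he : Function.Injective e) :
    KCC K e * (KCC K e)⁻¹ = 1 :=
  Matrix.mul_nonsing_inv _ (KCC_posDef hK he).det_pos.ne'.isUnit

lemma expand_aux (K : Matrix (Fin n) (Fin n) ℝ) (α p : Fin n → ℝ) (q : ℝ)
    (hA : α ⬝ᵥ (K *ᵥ p) = q) (hB : p ⬝ᵥ (K *ᵥ α) = q) (hC : p ⬝ᵥ (K *ᵥ p) = q) :
    (α - p) ⬝ᵥ (K *ᵥ (α - p)) = α ⬝ᵥ (K *ᵥ α) - q := by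
  rw [Matrix.mulVec_sub, sub_dotProduct, dotProduct_sub, dotProduct_sub,
    hA, hB, hC]
  ring

lemma quad_eq (hK : K.PosDef) (he : Function.Injective e) (α : Fin n → ℝ) :
    (α - Function.extend e ((KCC K e)⁻¹ *ᵥ (KCX K e *ᵥ α)) 0) ⬝ᵥ
      (K *ᵥ (α - Function.extend e ((KCC K e)⁻¹ *ᵥ (KCX K e *ᵥ α)) 0))
    = α ⬝ᵥ ((K - nystrom K e) *ᵥ α) := by
  rw [← P_mulVec he]
  have hnys : nystrom K e *ᵥ α
      = KXC K e *ᵥ ((KCC K e)⁻¹ *ᵥ (KCX K e *ᵥ α)) := by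
    rw [nystrom, ← Matrix.mulVec_mulVec, ← Matrix.mulVec_mulVec]
  have hKp : K *ᵥ (P e *ᵥ ((KCC K e)⁻¹ *ᵥ (KCX K e *ᵥ α)))
      = KXC K e *ᵥ ((KCC K e)⁻¹ *ᵥ (KCX K e *ᵥ α)) := by
    rw [Matrix.mulVec_mulVec, mul_P]
  have hA : α ⬝ᵥ (K *ᵥ (P e *ᵥ ((KCC K e)⁻¹ *ᵥ (KCX K e *ᵥ α))))
      = α ⬝ᵥ (nystrom K e *ᵥ α) := by
    rw [hKp, hnys]
  have hB : (P e *ᵥ ((KCC K e)⁻¹ *ᵥ (KCX K e *ᵥ α))) ⬝ᵥ (K *ᵥ α)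
      = α ⬝ᵥ (nystrom K e *ᵥ α) := by
    rw [dotProduct_comm, dot_trans' K α, Kt hK, hKp, hnys]
  have hC : (P e *ᵥ ((KCC K e)⁻¹ *ᵥ (KCX K e *ᵥ α))) ⬝ᵥ
      (K *ᵥ (P e *ᵥ ((KCC K e)⁻¹ *ᵥ (KCX K e *ᵥ α))))
      = α ⬝ᵥ (nystrom K e *ᵥ α) := by
    have hPt : (P e)ᵀ *ᵥ (KXC K e *ᵥ ((KCC K e)⁻¹ *ᵥ (KCX K e *ᵥ α)))
        = KCC K e *ᵥ ((KCC K e)⁻¹ *ᵥ (KCX K e *ᵥ α)) := by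
      rw [Matrix.mulVec_mulVec, Pt_mul_KXC]
    have hinv : KCC K e *ᵥ ((KCC K e)⁻¹ *ᵥ (KCX K e *ᵥ α)) = KCX K e *ᵥ α := by
      rw [Matrix.mulVec_mulVec, KCC_mul_inv hK he, Matrix.one_mulVec]
    rw [hKp, dot_trans' (P e), hPt, hinv, dotProduct_comm, KCX, ← dot_trans, hnys]
    rfl
  rw [expand_aux K α _ _ hA hB hC, Matrix.sub_mulVec, dotProduct_sub]

lemma nystrom_trans (hK : K.PosDef) : (nystrom K e)ᵀ = nystrom K e := by
  have hKCCt : (KCC K e)ᵀ = KCC K e := by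
    ext k l
    have := congrFun (congrFun hK.1 (e k)) (e l)
    simpa [KCC] using this
  simp only [nystrom, KCX, Matrix.transpose_mul, Matrix.transpose_transpose,
    Matrix.transpose_nonsing_inv, hKCCt, Matrix.mul_assoc]

lemma nystrom_psd (hK : K.PosDef) (he : Function.Injective e) :
    (K - nystrom K e).PosSemidef := by
  refine Matrix.PosSemidef.of_dotProduct_mulVec_nonneg ?_ ?_
  · show (K - nystrom K e)ᴴ = _
    have h1 : (K - nystrom K e)ᴴ = (K - nystrom K e)ᵀ := by
      ext i j; simp [Matrix.conjTranspose_apply]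
    rw [h1, Matrix.transpose_sub, nystrom_trans hK, Kt hK]
  · intro x
    have h0 := hK.posSemidef.dotProduct_mulVec_nonneg (x - Function.extend e ((KCC K e)⁻¹ *ᵥ (KCX K e *ᵥ x)) 0)
    simp only [star_trivial] at h0 ⊢
    rw [quad_eq hK he x] at h0
    exact h0

lemma quad_le_trace {N : ℕ} {M : Matrix (Fin N) (Fin N) ℝ} (hM : M.PosSemidef)
    (v : Fin N → ℝ) : v ⬝ᵥ (M *ᵥ v) ≤ (v ⬝ᵥ v) * M.trace := by
  obtain ⟨B, hB⟩ : ∃ B : Matrix (Fin N) (Fin N) ℝ, M = Bᴴ * B := by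
    open scoped MatrixOrder Matrix.Norms.L2Operator in
    exact CStarAlgebra.nonneg_iff_eq_star_mul_self.mp hM.nonneg
  have hBt : Bᴴ = Bᵀ := by ext i j; simp [Matrix.conjTranspose_apply]
  rw [hB, hBt]
  have hq : v ⬝ᵥ ((Bᵀ * B) *ᵥ v) = ∑ i, (∑ j, B i j * v j) ^ 2 := by
    rw [← Matrix.mulVec_mulVec, dot_trans, Matrix.transpose_transpose]
    simp [dotProduct, Matrix.mulVec, dotProduct, sq]
  have htr : (Bᵀ * B).trace = ∑ i, ∑ j, (B i j) ^ 2 := by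
    rw [Matrix.trace]
    simp only [Matrix.diag_apply, Matrix.mul_apply, Matrix.transpose_apply, sq]
    exact Finset.sum_comm
  rw [hq, htr]
  calc ∑ i, (∑ j, B i j * v j) ^ 2
      ≤ ∑ i, (∑ j, (B i j) ^ 2) * (∑ j, (v j) ^ 2) :=
        Finset.sum_le_sum fun i _ => Finset.sum_mul_sq_le_sq_mul_sq _ _ _
    _ = (v ⬝ᵥ v) * ∑ i, ∑ j, (B i j) ^ 2 := by
        rw [← Finset.sum_mul, mul_comm]
        simp [dotProduct, sq]

end ProjAux

/-- (Per-vector trace bound of Theorem 5.1.) For a real symmetric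
positive definite matrix `K`, injective control indices `e` with Nyström approximation
`Q`, and any `α ∈ ℝⁿ`, the projection residual `δ = α − ι(K_CC⁻¹ K_CX α)` (extension by
zero along `e`) satisfies `δᵀ K δ ≤ ‖α‖² · tr(K − Q)`. -/
theorem projection_residual_le_trace {n m : ℕ}
    (K : Matrix (Fin n) (Fin n) ℝ) (hK : K.PosDef)
    (e : Fin m → Fin n) (he : Function.Injective e)
    (α : Fin n → ℝ) :
    let β := (KCC K e)⁻¹ *ᵥ (KCX K e *ᵥ α)
    let δ := α - Function.extend e β 0
    δ ⬝ᵥ (K *ᵥ δ) ≤ (α ⬝ᵥ α) * (K - nystrom K e).trace := by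
  intro β δ
  have h1 : δ ⬝ᵥ (K *ᵥ δ) = α ⬝ᵥ ((K - nystrom K e) *ᵥ α) :=
    ProjAux.quad_eq hK he α
  rw [h1]
  exact ProjAux.quad_le_trace (ProjAux.nystrom_psd hK he) α
end
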